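/- arXiv:1404.2740 — 11 statements merged into one kernel-verified Lean document; each statement's English description precedes it below -/
import Mathlib

section
/- Let X_1,…,X_r : ℝ^n → ℝ^n be smooth vector fields that are linearly independent over ℝ and satisfy [X_α, X_β] = Σ_{γ=1}^r c_{αβγ} X_γ for real structure constants c_{αβγ}. Let b_1,…,b_r and f_0, f_1,…,f_r : ℝ → ℝ be smooth, and define vector fields on ℝ × ℝ^n ≅ ℝ^{1+n} by X̄(t,x) = (1, Σ_{α=1}^r b_α(t) X_α(x)) and Y(t,x) = (f_0(t), Σ_{α=1}^r f_α(t) X_α(x)). Then there exists a function h : ℝ × ℝ^n → ℝ with [Y, X̄] = h·X̄ if and only if, setting b_0(t) := f_0'(t), the identities f_α'(t) = f_0(t) b_α'(t) + b_α(t) b_0(t) + Σ_{β,γ=1}^r b_β(t) f_γ(t) c_{γβα} hold for all α = 1,…,r and all t ∈ ℝ; and in that case necessarily h(t,x) = −f_0'(t) for all (t,x). -/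
open ContDiff VectorField

private lemma fderiv_pair_apply {n r : ℕ} (X : Fin r → (Fin n → ℝ) → (Fin n → ℝ))
    (hX : ∀ α, ContDiff ℝ ∞ (X α)) (g : Fin r → ℝ → ℝ) (hg : ∀ α, ContDiff ℝ ∞ (g α))
    (k : ℝ → ℝ) (hk : ContDiff ℝ ∞ k) (p w : ℝ × (Fin n → ℝ)) :
    fderiv ℝ (fun q : ℝ × (Fin n → ℝ) => (k q.1, ∑ α, g α q.1 • X α q.2)) p w
      = (w.1 * deriv k p.1,
         ∑ α, (g α p.1 • fderiv ℝ (X α) p.2 w.2 + (w.1 * deriv (g α) p.1) • X α p.2)) := by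
  have hone : (∞ : WithTop ℕ∞) ≠ 0 := by simp
  have hk1 : HasFDerivAt (fun q : ℝ × (Fin n → ℝ) => k q.1)
      (((1 : ℝ →L[ℝ] ℝ).smulRight (deriv k p.1)).comp (ContinuousLinearMap.fst ℝ ℝ _)) p :=
    (((hk.differentiable hone) p.1).hasDerivAt.hasFDerivAt).comp p hasFDerivAt_fst
  have hterm : ∀ α : Fin r, HasFDerivAt (fun q : ℝ × (Fin n → ℝ) => g α q.1 • X α q.2)
      (g α p.1 • ((fderiv ℝ (X α) p.2).comp (ContinuousLinearMap.snd ℝ ℝ _)) +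
        ((((1 : ℝ →L[ℝ] ℝ).smulRight (deriv (g α) p.1)).comp
          (ContinuousLinearMap.fst ℝ ℝ _)).smulRight (X α p.2))) p := by
    intro α
    have hgα : HasFDerivAt (fun q : ℝ × (Fin n → ℝ) => g α q.1)
        (((1 : ℝ →L[ℝ] ℝ).smulRight (deriv (g α) p.1)).comp (ContinuousLinearMap.fst ℝ ℝ _)) p :=
      ((((hg α).differentiable hone) p.1).hasDerivAt.hasFDerivAt).comp p hasFDerivAt_fst
    have hXα : HasFDerivAt (fun q : ℝ × (Fin n → ℝ) => X α q.2)
        ((fderiv ℝ (X α) p.2).comp (ContinuousLinearMap.snd ℝ ℝ _)) p :=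
      ((((hX α).differentiable hone) p.2).hasFDerivAt).comp p hasFDerivAt_snd
    exact hgα.smul hXα
  have hsum : HasFDerivAt (fun q : ℝ × (Fin n → ℝ) => ∑ α, g α q.1 • X α q.2)
      (∑ α, (g α p.1 • ((fderiv ℝ (X α) p.2).comp (ContinuousLinearMap.snd ℝ ℝ _)) +
        ((((1 : ℝ →L[ℝ] ℝ).smulRight (deriv (g α) p.1)).comp
          (ContinuousLinearMap.fst ℝ ℝ _)).smulRight (X α p.2)))) p :=
    HasFDerivAt.fun_sum (fun α _ => hterm α)
  have htotal := hk1.prodMk hsum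
  rw [htotal.fderiv]
  simp [ContinuousLinearMap.sum_apply, mul_comm]

private lemma sum_rotate {n r : ℕ} (F : Fin r → Fin r → Fin r → (Fin n → ℝ)) :
    ∑ α, ∑ β, ∑ γ, F α β γ = ∑ γ, ∑ α, ∑ β, F α β γ := by
  rw [show (∑ γ, ∑ α, ∑ β, F α β γ) = ∑ α, ∑ γ, ∑ β, F α β γ from Finset.sum_comm]
  exact Finset.sum_congr rfl fun α _ => Finset.sum_comm

private lemma bracket_eval {n r : ℕ} (X : Fin r → (Fin n → ℝ) → (Fin n → ℝ))
    (hX : ∀ α, ContDiff ℝ ∞ (X α))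
    (c : Fin r → Fin r → Fin r → ℝ)
    (hc : ∀ α β, lieBracket ℝ (X α) (X β) = fun x => ∑ γ, c α β γ • X γ x)
    (b f : Fin r → ℝ → ℝ) (f0 : ℝ → ℝ)
    (hb : ∀ α, ContDiff ℝ ∞ (b α)) (hf : ∀ α, ContDiff ℝ ∞ (f α))
    (hf0 : ContDiff ℝ ∞ f0) (p : ℝ × (Fin n → ℝ)) :
    lieBracket ℝ (fun q : ℝ × (Fin n → ℝ) => (f0 q.1, ∑ α, f α q.1 • X α q.2))
      (fun q : ℝ × (Fin n → ℝ) => ((1:ℝ), ∑ α, b α q.1 • X α q.2)) p =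
    (-deriv f0 p.1,
     ∑ α, (f0 p.1 * deriv (b α) p.1 - deriv (f α) p.1
        + ∑ β, ∑ γ, b β p.1 * f γ p.1 * c γ β α) • X α p.2) := by
  have hA : fderiv ℝ (fun q : ℝ × (Fin n → ℝ) => ((1:ℝ), ∑ α, b α q.1 • X α q.2)) p
      ((fun q : ℝ × (Fin n → ℝ) => (f0 q.1, ∑ α, f α q.1 • X α q.2)) p)
      = ((0:ℝ), ∑ α, (b α p.1 • fderiv ℝ (X α) p.2 (∑ β, f β p.1 • X β p.2)
          + (f0 p.1 * deriv (b α) p.1) • X α p.2)) := by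
    have h := fderiv_pair_apply X hX b hb (fun _ => (1:ℝ)) contDiff_const p
      (f0 p.1, ∑ β, f β p.1 • X β p.2)
    simpa using h
  have hB : fderiv ℝ (fun q : ℝ × (Fin n → ℝ) => (f0 q.1, ∑ α, f α q.1 • X α q.2)) p
      ((fun q : ℝ × (Fin n → ℝ) => ((1:ℝ), ∑ α, b α q.1 • X α q.2)) p)
      = (deriv f0 p.1, ∑ α, (f α p.1 • fderiv ℝ (X α) p.2 (∑ β, b β p.1 • X β p.2)
          + deriv (f α) p.1 • X α p.2)) := by
    have h := fderiv_pair_apply X hX f hf f0 hf0 p ((1:ℝ), ∑ β, b β p.1 • X β p.2)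
    simpa using h
  unfold VectorField.lieBracket
  rw [hA, hB, Prod.mk_sub_mk]
  refine Prod.ext (by simp) ?_
  have e1 : ∀ α, fderiv ℝ (X α) p.2 (∑ β, f β p.1 • X β p.2)
      = ∑ β, f β p.1 • fderiv ℝ (X α) p.2 (X β p.2) := by
    intro α
    rw [map_sum]
    exact Finset.sum_congr rfl fun β _ => (fderiv ℝ (X α) p.2).map_smul _ _
  have e2 : ∀ α, fderiv ℝ (X α) p.2 (∑ β, b β p.1 • X β p.2)
      = ∑ β, b β p.1 • fderiv ℝ (X α) p.2 (X β p.2) := by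
    intro α
    rw [map_sum]
    exact Finset.sum_congr rfl fun β _ => (fderiv ℝ (X α) p.2).map_smul _ _
  have hbr : ∀ α β, fderiv ℝ (X α) p.2 (X β p.2) - fderiv ℝ (X β) p.2 (X α p.2)
      = ∑ γ, c β α γ • X γ p.2 := by
    intro α β
    have h := congrFun (hc β α) p.2
    simpa [VectorField.lieBracket] using h
  have claim : ∑ α, b α p.1 • fderiv ℝ (X α) p.2 (∑ β, f β p.1 • X β p.2)
      - ∑ α, f α p.1 • fderiv ℝ (X α) p.2 (∑ β, b β p.1 • X β p.2)
      = ∑ α, (∑ β, ∑ γ, b β p.1 * f γ p.1 * c γ β α) • X α p.2 := by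
    have rhs_eq : (∑ α, (∑ β, ∑ γ, b β p.1 * f γ p.1 * c γ β α) • X α p.2)
        = ∑ α, ∑ β, ∑ γ, ((b α p.1 * f β p.1) * c β α γ) • X γ p.2 := by
      simp only [Finset.sum_smul]
      exact (sum_rotate (fun α β γ => ((b α p.1 * f β p.1) * c β α γ) • X γ p.2)).symm
    rw [rhs_eq]
    simp only [e1, e2, Finset.smul_sum, smul_smul]
    rw [show (∑ α, ∑ β, (f α p.1 * b β p.1) • fderiv ℝ (X α) p.2 (X β p.2))
        = ∑ α, ∑ β, (f β p.1 * b α p.1) • fderiv ℝ (X β) p.2 (X α p.2) from Finset.sum_comm]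
    rw [← Finset.sum_sub_distrib]
    refine Finset.sum_congr rfl fun α _ => ?_
    rw [← Finset.sum_sub_distrib]
    refine Finset.sum_congr rfl fun β _ => ?_
    rw [mul_comm (f β p.1) (b α p.1), ← smul_sub, hbr α β, Finset.smul_sum]
    exact Finset.sum_congr rfl fun γ _ => smul_smul _ _ _
  simp only [Finset.sum_add_distrib, add_smul, sub_smul, Finset.sum_sub_distrib]
  rw [← claim]
  abel

/-- A vector field `Y = f₀ ∂/∂t + Σ fα Xα` is a Lie symmetry of the Lie
system `X̄ = ∂/∂t + Σ bα Xα` (i.e. `[Y, X̄] = h X̄` for some function `h`) if and only if the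
coefficients satisfy the symmetry system, and in that case `h = -f₀'`. -/
theorem lie_symmetry_iff_symmetry_system {n r : ℕ}
    (X : Fin r → (Fin n → ℝ) → (Fin n → ℝ))
    (hXsmooth : ∀ α, ContDiff ℝ ∞ (X α))
    (hXind : LinearIndependent ℝ X)
    (c : Fin r → Fin r → Fin r → ℝ)
    (hc : ∀ α β, lieBracket ℝ (X α) (X β) = fun x => ∑ γ, c α β γ • X γ x)
    (b f : Fin r → ℝ → ℝ) (f0 : ℝ → ℝ)
    (hb : ∀ α, ContDiff ℝ ∞ (b α)) (hf : ∀ α, ContDiff ℝ ∞ (f α))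
    (hf0 : ContDiff ℝ ∞ f0)
    (Xbar Y : ℝ × (Fin n → ℝ) → ℝ × (Fin n → ℝ))
    (hXbar : Xbar = fun p => (1, ∑ α, b α p.1 • X α p.2))
    (hY : Y = fun p => (f0 p.1, ∑ α, f α p.1 • X α p.2)) :
    ((∃ h : ℝ × (Fin n → ℝ) → ℝ, ∀ p, lieBracket ℝ Y Xbar p = h p • Xbar p) ↔
      (∀ α t, deriv (f α) t = f0 t * deriv (b α) t + b α t * deriv f0 t +
        ∑ β, ∑ γ, b β t * f γ t * c γ β α)) ∧
    (∀ h : ℝ × (Fin n → ℝ) → ℝ, (∀ p, lieBracket ℝ Y Xbar p = h p • Xbar p) →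
      ∀ p, h p = -deriv f0 p.1) := by
  subst hXbar hY
  have key := bracket_eval X hXsmooth c hc b f f0 hb hf hf0
  have hfst : ∀ (h : ℝ × (Fin n → ℝ) → ℝ),
      (∀ p, lieBracket ℝ (fun p => (f0 p.1, ∑ α, f α p.1 • X α p.2))
        (fun p => ((1:ℝ), ∑ α, b α p.1 • X α p.2)) p
        = h p • (fun p => ((1:ℝ), ∑ α, b α p.1 • X α p.2)) p) →
      ∀ p, h p = -deriv f0 p.1 := by
    intro h hh p
    have hp := hh p
    rw [key p] at hp
    have h1 := congrArg Prod.fst hp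
    simpa using h1.symm
  refine ⟨⟨?_, ?_⟩, hfst⟩
  · rintro ⟨h, hh⟩ α t
    have hx : ∀ x, ∑ α', (f0 t * deriv (b α') t - deriv (f α') t
          + ∑ β, ∑ γ, b β t * f γ t * c γ β α') • X α' x
        = ∑ α', (-(deriv f0 t * b α' t)) • X α' x := by
      intro x
      have hp := hh (t, x)
      rw [key (t, x)] at hp
      have h2 := congrArg Prod.snd hp
      rw [hfst h hh (t, x)] at h2
      simpa [Finset.smul_sum, smul_smul] using h2
    have hlin := Fintype.linearIndependent_iff.mp hXind
      (fun α' => f0 t * deriv (b α') t - deriv (f α') t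
          + (∑ β, ∑ γ, b β t * f γ t * c γ β α') + deriv f0 t * b α' t) ?_ α
    · have hlin' : f0 t * deriv (b α) t - deriv (f α) t
          + (∑ β, ∑ γ, b β t * f γ t * c γ β α) + deriv f0 t * b α t = 0 := hlin
      linear_combination -hlin'
    · funext x
      simp only [Finset.sum_apply, Pi.smul_apply, Pi.zero_apply, smul_eq_mul]
      have hx' := hx x
      calc ∑ α', (f0 t * deriv (b α') t - deriv (f α') t
              + (∑ β, ∑ γ, b β t * f γ t * c γ β α') + deriv f0 t * b α' t) • X α' x
          = ∑ α', ((f0 t * deriv (b α') t - deriv (f α') t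
              + ∑ β, ∑ γ, b β t * f γ t * c γ β α') • X α' x
              + (deriv f0 t * b α' t) • X α' x) := by
            exact Finset.sum_congr rfl fun α' _ => add_smul _ _ _
        _ = (∑ α', (f0 t * deriv (b α') t - deriv (f α') t
              + ∑ β, ∑ γ, b β t * f γ t * c γ β α') • X α' x)
              + ∑ α', (deriv f0 t * b α' t) • X α' x := Finset.sum_add_distrib
        _ = (∑ α', (-(deriv f0 t * b α' t)) • X α' x)
              + ∑ α', (deriv f0 t * b α' t) • X α' x := by rw [hx']
        _ = ∑ α', ((-(deriv f0 t * b α' t)) • X α' x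
              + (deriv f0 t * b α' t) • X α' x) := Finset.sum_add_distrib.symm
        _ = 0 := by
            refine Finset.sum_eq_zero fun α' _ => ?_
            rw [← add_smul, neg_add_cancel, zero_smul]
  · intro hcond
    refine ⟨fun p => -deriv f0 p.1, fun p => ?_⟩
    rw [key p]
    have hcoef : ∀ α', f0 p.1 * deriv (b α') p.1 - deriv (f α') p.1
        + ∑ β, ∑ γ, b β p.1 * f γ p.1 * c γ β α' = -deriv f0 p.1 * b α' p.1 := by
      intro α'
      have h := hcond α' p.1
      linear_combination -h
    show _ = (-deriv f0 p.1) • ((1:ℝ), ∑ α, b α p.1 • X α p.2)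
    rw [Prod.smul_mk]
    refine Prod.ext (by simp) ?_
    show (∑ α, (f0 p.1 * deriv (b α) p.1 - deriv (f α) p.1
        + ∑ β, ∑ γ, b β p.1 * f γ p.1 * c γ β α) • X α p.2)
        = (-deriv f0 p.1) • ∑ α, b α p.1 • X α p.2
    rw [Finset.smul_sum]
    refine Finset.sum_congr rfl fun α' _ => ?_
    rw [smul_smul, hcoef α']
end

section
/- Let X_1,…,X_r : ℝ^n → ℝ^n be smooth vector fields with [X_α, X_β] = Σ_γ c_{αβγ} X_γ, let b_1,…,b_r : ℝ → ℝ be smooth, and define X̄(t,x) = (1, Σ_α b_α(t) X_α(x)) on ℝ × ℝ^n. Let 𝔚 ⊆ C^∞(ℝ, ℝ) be a linear subspace closed under the bracket {f, g}_ℝ = f g' − g f'. Define S^V_{X,𝔚} to be the set of vector fields Y on ℝ × ℝ^n of the form Y(t,x) = (f_0(t), Σ_{α=1}^r f_α(t) X_α(x)) with smooth coefficients, such that f_0 ∈ 𝔚 and [Y, X̄] = h·X̄ for some function h on ℝ × ℝ^n. Then S^V_{X,𝔚} is a real linear subspace of the space of vector fields on ℝ × ℝ^n which is closed under the Lie bracket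 of vector fields; in particular it is a Lie algebra of Lie symmetries of the system associated with X. -/
open ContDiff VectorField

variable {n r : ℕ}

noncomputable def form (X : Fin r → (Fin n → ℝ) → (Fin n → ℝ)) (f0 : ℝ → ℝ)
    (f : Fin r → ℝ → ℝ) : ℝ × (Fin n → ℝ) → ℝ × (Fin n → ℝ) :=
  fun p => (f0 p.1, ∑ α, f α p.1 • X α p.2)

lemma form_smooth {X : Fin r → (Fin n → ℝ) → (Fin n → ℝ)} (hX : ∀ α, ContDiff ℝ ∞ (X α))
    {f0 : ℝ → ℝ} {f : Fin r → ℝ → ℝ} (hf0 : ContDiff ℝ ∞ f0) (hf : ∀ α, ContDiff ℝ ∞ (f α)) :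
    ContDiff ℝ ∞ (form X f0 f) := by
  apply ContDiff.prodMk
  · exact hf0.comp contDiff_fst
  · exact ContDiff.sum fun α _ => ((hf α).comp contDiff_fst).smul ((hX α).comp contDiff_snd)

lemma form_hasFDerivAt {X : Fin r → (Fin n → ℝ) → (Fin n → ℝ)} (hX : ∀ α, ContDiff ℝ ∞ (X α))
    {f0 : ℝ → ℝ} {f : Fin r → ℝ → ℝ} (hf0 : ContDiff ℝ ∞ f0) (hf : ∀ α, ContDiff ℝ ∞ (f α))
    (p : ℝ × (Fin n → ℝ)) :
    HasFDerivAt (form X f0 f)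
      ((deriv f0 p.1 • ContinuousLinearMap.fst ℝ ℝ (Fin n → ℝ)).prod
        (∑ α : Fin r, (f α p.1 • ((fderiv ℝ (X α) p.2).comp
            (ContinuousLinearMap.snd ℝ ℝ (Fin n → ℝ))) +
          (deriv (f α) p.1 • ContinuousLinearMap.fst ℝ ℝ (Fin n → ℝ)).smulRight (X α p.2)))) p := by
  apply HasFDerivAt.prodMk
  · exact (hf0.differentiable (by simp) p.1).hasDerivAt.comp_hasFDerivAt p
      (hasFDerivAt_fst)
  · apply HasFDerivAt.fun_sum
    intro α _
    exact HasFDerivAt.smul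
      (((hf α).differentiable (by simp) p.1).hasDerivAt.comp_hasFDerivAt p
        hasFDerivAt_fst)
      (((hX α).differentiable (by simp) p.2).hasFDerivAt.comp p hasFDerivAt_snd)

lemma form_fderiv_apply {X : Fin r → (Fin n → ℝ) → (Fin n → ℝ)} (hX : ∀ α, ContDiff ℝ ∞ (X α))
    {f0 : ℝ → ℝ} {f : Fin r → ℝ → ℝ} (hf0 : ContDiff ℝ ∞ f0) (hf : ∀ α, ContDiff ℝ ∞ (f α))
    (p v : ℝ × (Fin n → ℝ)) :
    fderiv ℝ (form X f0 f) p v =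
      (deriv f0 p.1 * v.1,
        ∑ α, (f α p.1 • fderiv ℝ (X α) p.2 v.2 + (deriv (f α) p.1 * v.1) • X α p.2)) := by
  rw [(form_hasFDerivAt hX hf0 hf p).fderiv]
  simp [ContinuousLinearMap.sum_apply, smul_smul, mul_comm]

lemma form_lieBracket {X : Fin r → (Fin n → ℝ) → (Fin n → ℝ)} (hX : ∀ α, ContDiff ℝ ∞ (X α))
    {c : Fin r → Fin r → Fin r → ℝ}
    (hc : ∀ α β, lieBracket ℝ (X α) (X β) = fun x => ∑ γ, c α β γ • X γ x)
    {f0 g0 : ℝ → ℝ} {f g : Fin r → ℝ → ℝ} (hf0 : ContDiff ℝ ∞ f0) (hf : ∀ α, ContDiff ℝ ∞ (f α))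
    (hg0 : ContDiff ℝ ∞ g0) (hg : ∀ α, ContDiff ℝ ∞ (g α)) :
    lieBracket ℝ (form X f0 f) (form X g0 g) =
      form X (fun t => f0 t * deriv g0 t - g0 t * deriv f0 t)
        (fun γ t => f0 t * deriv (g γ) t - g0 t * deriv (f γ) t +
          ∑ α, ∑ β, f α t * g β t * c α β γ) := by
  funext p
  have key : ∀ α β (x : Fin n → ℝ),
      fderiv ℝ (X β) x (X α x) - fderiv ℝ (X α) x (X β x) = ∑ γ, c α β γ • X γ x := by
    intro α β x
    have := congrFun (hc α β) x
    simpa [lieBracket] using this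
  rw [lieBracket, form_fderiv_apply hX hf0 hf, form_fderiv_apply hX hg0 hg]
  simp only [form, Prod.mk_sub_mk]
  refine Prod.ext (by ring) ?_
  simp only []
  -- second components
  have hlin : ∀ α, (fun y => fderiv ℝ (X α) p.2 y) = fderiv ℝ (X α) p.2 := fun _ => rfl
  have expand : ∀ (u : Fin r → ℝ) (α : Fin r),
      fderiv ℝ (X α) p.2 (∑ β, u β • X β p.2) = ∑ β, u β • fderiv ℝ (X α) p.2 (X β p.2) := by
    intro u α
    rw [map_sum]
    simp
  simp only [expand]
  have dsum : (∑ a : Fin r, ∑ b : Fin r, (f a p.1 * g b p.1) •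
        (fderiv ℝ (X b) p.2 (X a p.2) - fderiv ℝ (X a) p.2 (X b p.2)))
      = ∑ x : Fin r, (∑ α, ∑ β, f α p.1 * g β p.1 * c α β x) • X x p.2 := by
    simp only [key, Finset.smul_sum, smul_smul, Finset.sum_smul]
    refine Eq.trans (Finset.sum_congr rfl fun a _ => Finset.sum_comm) Finset.sum_comm
  simp only [Finset.smul_sum, smul_smul, add_smul, sub_smul, Finset.sum_add_distrib,
    Finset.sum_sub_distrib, smul_sub] at dsum ⊢
  have hA : (∑ x : Fin r, ∑ α : Fin r, (g x p.1 * f α p.1) • fderiv ℝ (X x) p.2 (X α p.2))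
      = ∑ a : Fin r, ∑ b : Fin r, (f a p.1 * g b p.1) • fderiv ℝ (X b) p.2 (X a p.2) := by
    rw [Finset.sum_comm]
    exact Finset.sum_congr rfl fun a _ => Finset.sum_congr rfl fun b _ => by rw [mul_comm]
  rw [hA, ← dsum]
  simp only [mul_comm]
  abel

lemma one_le_infty : (1 : WithTop ℕ∞) ≤ ∞ := WithTop.coe_le_coe.mpr le_top

lemma le_infty2 : (2 : WithTop ℕ∞) ≤ ∞ := WithTop.coe_le_coe.mpr le_top

lemma infty_add_one : (∞ : WithTop ℕ∞) + 1 ≤ ∞ := by simp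

lemma lieBracket_fun_smul {E : Type*} [NormedAddCommGroup E] [NormedSpace ℝ E]
    (V W : E → E) (cf : E → ℝ) (p : E)
    (hcf : DifferentiableAt ℝ cf p) (hW : DifferentiableAt ℝ W p) :
    lieBracket ℝ V (fun q => cf q • W q) p =
      (fderiv ℝ cf p (V p)) • W p + cf p • lieBracket ℝ V W p := by
  simp only [lieBracket, fderiv_fun_smul hcf hW, ContinuousLinearMap.add_apply,
    ContinuousLinearMap.smul_apply, ContinuousLinearMap.smulRight_apply, map_smul]
  module


/-- Given a Lie system `X̄ = ∂/∂t + Σ bα Xα` and a linear subspace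
`𝔚 ⊆ C^∞(ℝ,ℝ)` closed under the bracket `{f,g}_ℝ = f g' − g f'`, the set `S^V_{X,𝔚}` of Lie
symmetries `Y = f₀ ∂/∂t + Σ fα Xα` with `f₀ ∈ 𝔚` is a real linear subspace of vector fields
on `ℝ × ℝ^n` closed under the Lie bracket of vector fields. -/
theorem symmetry_space_is_lie_algebra {n r : ℕ}
    (X : Fin r → (Fin n → ℝ) → (Fin n → ℝ))
    (hXsmooth : ∀ α, ContDiff ℝ ∞ (X α))
    (c : Fin r → Fin r → Fin r → ℝ)
    (hc : ∀ α β, lieBracket ℝ (X α) (X β) = fun x => ∑ γ, c α β γ • X γ x)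
    (b : Fin r → ℝ → ℝ) (hb : ∀ α, ContDiff ℝ ∞ (b α))
    (Xbar : ℝ × (Fin n → ℝ) → ℝ × (Fin n → ℝ))
    (hXbar : Xbar = fun p => (1, ∑ α, b α p.1 • X α p.2))
    (𝔚 : Submodule ℝ (ℝ → ℝ))
    (h𝔚smooth : ∀ f ∈ 𝔚, ContDiff ℝ ∞ f)
    (h𝔚br : ∀ f ∈ 𝔚, ∀ g ∈ 𝔚, (fun t => f t * deriv g t - g t * deriv f t) ∈ 𝔚)
    (S : Set (ℝ × (Fin n → ℝ) → ℝ × (Fin n → ℝ)))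
    (hS : S = {Y | ∃ (f0 : ℝ → ℝ) (f : Fin r → ℝ → ℝ),
      ContDiff ℝ ∞ f0 ∧ (∀ α, ContDiff ℝ ∞ (f α)) ∧ f0 ∈ 𝔚 ∧
      Y = (fun p => (f0 p.1, ∑ α, f α p.1 • X α p.2)) ∧
      ∃ h : ℝ × (Fin n → ℝ) → ℝ, ∀ p, lieBracket ℝ Y Xbar p = h p • Xbar p}) :
    (0 : ℝ × (Fin n → ℝ) → ℝ × (Fin n → ℝ)) ∈ S ∧
    (∀ Y ∈ S, ∀ a : ℝ, a • Y ∈ S) ∧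
    (∀ Y ∈ S, ∀ Z ∈ S, Y + Z ∈ S) ∧
    (∀ Y ∈ S, ∀ Z ∈ S, lieBracket ℝ Y Z ∈ S) := by
  subst hS
  have hXbarsm : ContDiff ℝ ∞ Xbar := by
    rw [hXbar]; exact form_smooth hXsmooth contDiff_const hb
  refine ⟨?_, ?_, ?_, ?_⟩
  · -- zero
    refine ⟨0, 0, contDiff_const, fun _ => contDiff_const, zero_mem _, ?_, 0, ?_⟩
    · funext p; simp; rfl
    · intro p
      have h0 : (0 : ℝ × (Fin n → ℝ) → ℝ × (Fin n → ℝ)) = fun _ => (0 : ℝ × (Fin n → ℝ)) := rfl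
      simp [lieBracket, h0, fderiv_const]
  · -- smul
    rintro Y ⟨f0, f, hf0, hf, hf0W, rfl, h, hh⟩ a
    have hYsm : ContDiff ℝ ∞ (form X f0 f) := form_smooth hXsmooth hf0 hf
    refine ⟨a • f0, fun α => a • f α, hf0.const_smul a, fun α => (hf α).const_smul a,
      Submodule.smul_mem _ a hf0W, ?_, fun p => a * h p, ?_⟩
    · funext p
      simp [Finset.smul_sum, smul_smul, Prod.smul_def]
    · intro p
      show lieBracket ℝ (a • form X f0 f) Xbar p = (a * h p) • Xbar p
      have hh' : ∀ q, lieBracket ℝ (form X f0 f) Xbar q = h q • Xbar q := hh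
      rw [lieBracket_const_smul_left ((hYsm.differentiable (by simp)) p), hh' p, smul_smul]
  · -- add
    rintro Y ⟨f0, f, hf0, hf, hf0W, rfl, h, hh⟩ Z ⟨g0, g, hg0, hg, hg0W, rfl, k, hk⟩
    have hYsm : ContDiff ℝ ∞ (form X f0 f) := form_smooth hXsmooth hf0 hf
    have hZsm : ContDiff ℝ ∞ (form X g0 g) := form_smooth hXsmooth hg0 hg
    refine ⟨f0 + g0, fun α => f α + g α, hf0.add hg0, fun α => (hf α).add (hg α),
      add_mem hf0W hg0W, ?_, fun p => h p + k p, ?_⟩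
    · funext p
      simp [Finset.sum_add_distrib, add_smul, Prod.ext_iff]
    · intro p
      show lieBracket ℝ (form X f0 f + form X g0 g) Xbar p = (h p + k p) • Xbar p
      rw [lieBracket_add_left (hYsm.differentiable (by simp) p)
        (hZsm.differentiable (by simp) p)]
      have hh' : ∀ q, lieBracket ℝ (form X f0 f) Xbar q = h q • Xbar q := hh
      have hk' : ∀ q, lieBracket ℝ (form X g0 g) Xbar q = k q • Xbar q := hk
      rw [hh' p, hk' p, add_smul]
  · -- bracket
    rintro Y ⟨f0, f, hf0, hf, hf0W, rfl, h, hh⟩ Z ⟨g0, g, hg0, hg, hg0W, rfl, k, hk⟩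
    have hYsm : ContDiff ℝ ∞ (form X f0 f) := form_smooth hXsmooth hf0 hf
    have hZsm : ContDiff ℝ ∞ (form X g0 g) := form_smooth hXsmooth hg0 hg
    have hdg0 : ContDiff ℝ ∞ (deriv g0) := (contDiff_infty_iff_deriv.mp hg0).2
    have hdf0 : ContDiff ℝ ∞ (deriv f0) := (contDiff_infty_iff_deriv.mp hf0).2
    have hdg : ∀ α, ContDiff ℝ ∞ (deriv (g α)) := fun α => (contDiff_infty_iff_deriv.mp (hg α)).2
    have hdf : ∀ α, ContDiff ℝ ∞ (deriv (f α)) := fun α => (contDiff_infty_iff_deriv.mp (hf α)).2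
    have hh' : ∀ q, lieBracket ℝ (form X f0 f) Xbar q = h q • Xbar q := hh
    have hk' : ∀ q, lieBracket ℝ (form X g0 g) Xbar q = k q • Xbar q := hk
    have hYbrsm : ContDiff ℝ ∞ (lieBracket ℝ (form X f0 f) Xbar) :=
      hYsm.lieBracket_vectorField hXbarsm infty_add_one
    have hZbrsm : ContDiff ℝ ∞ (lieBracket ℝ (form X g0 g) Xbar) :=
      hZsm.lieBracket_vectorField hXbarsm infty_add_one
    have hY'sm : ContDiff ℝ ∞ (fun q => (lieBracket ℝ (form X f0 f) Xbar q).1) :=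
      contDiff_fst.comp hYbrsm
    have hZ'sm : ContDiff ℝ ∞ (fun q => (lieBracket ℝ (form X g0 g) Xbar q).1) :=
      contDiff_fst.comp hZbrsm
    have hYeq : ∀ q, lieBracket ℝ (form X f0 f) Xbar q =
        (lieBracket ℝ (form X f0 f) Xbar q).1 • Xbar q := by
      intro q
      have h1 : (lieBracket ℝ (form X f0 f) Xbar q).1 = h q := by
        rw [hh' q, hXbar]; simp
      rw [h1]; exact hh' q
    have hZeq : ∀ q, lieBracket ℝ (form X g0 g) Xbar q =
        (lieBracket ℝ (form X g0 g) Xbar q).1 • Xbar q := by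
      intro q
      have h1 : (lieBracket ℝ (form X g0 g) Xbar q).1 = k q := by
        rw [hk' q, hXbar]; simp
      rw [h1]; exact hk' q
    have jac : ∀ p, lieBracket ℝ (lieBracket ℝ (form X f0 f) (form X g0 g)) Xbar p
        = lieBracket ℝ (form X f0 f) (lieBracket ℝ (form X g0 g) Xbar) p
          - lieBracket ℝ (form X g0 g) (lieBracket ℝ (form X f0 f) Xbar) p := by
      intro p
      exact eq_sub_of_add_eq (leibniz_identity_lieBracket (by simp) (hYsm.contDiffAt.of_le le_infty2)
        (hZsm.contDiffAt.of_le le_infty2) (hXbarsm.contDiffAt.of_le le_infty2)).symm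
    obtain ⟨φ, hφsm, hφ⟩ : ∃ φ : ℝ × (Fin n → ℝ) → ℝ, ContDiff ℝ ∞ φ ∧
        ∀ q, lieBracket ℝ (form X f0 f) Xbar q = φ q • Xbar q := ⟨_, hY'sm, hYeq⟩
    obtain ⟨ψ, hψsm, hψ⟩ : ∃ ψ : ℝ × (Fin n → ℝ) → ℝ, ContDiff ℝ ∞ ψ ∧
        ∀ q, lieBracket ℝ (form X g0 g) Xbar q = ψ q • Xbar q := ⟨_, hZ'sm, hZeq⟩
    refine ⟨fun t => f0 t * deriv g0 t - g0 t * deriv f0 t,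
      fun γ t => f0 t * deriv (g γ) t - g0 t * deriv (f γ) t + ∑ α, ∑ β, f α t * g β t * c α β γ,
      (hf0.mul hdg0).sub (hg0.mul hdf0),
      fun γ => ((hf0.mul (hdg γ)).sub (hg0.mul (hdf γ))).add
        (ContDiff.sum fun α _ => ContDiff.sum fun β _ => ((hf α).mul (hg β)).mul contDiff_const),
      h𝔚br f0 hf0W g0 hg0W,
      form_lieBracket hXsmooth hc hf0 hf hg0 hg,
      fun p => fderiv ℝ ψ p (form X f0 f p) - fderiv ℝ φ p (form X g0 g p), ?_⟩
    intro p
    show lieBracket ℝ (lieBracket ℝ (form X f0 f) (form X g0 g)) Xbar p =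
      (fderiv ℝ ψ p (form X f0 f p) - fderiv ℝ φ p (form X g0 g p)) • Xbar p
    have e1 : lieBracket ℝ (form X g0 g) Xbar = fun q => ψ q • Xbar q := funext hψ
    have e2 : lieBracket ℝ (form X f0 f) Xbar = fun q => φ q • Xbar q := funext hφ
    rw [jac p, e1, e2,
      lieBracket_fun_smul _ _ _ _ (hψsm.differentiable (by simp) p)
        (hXbarsm.differentiable (by simp) p),
      lieBracket_fun_smul _ _ _ _ (hφsm.differentiable (by simp) p)
        (hXbarsm.differentiable (by simp) p),
      hφ p, hψ p]
    module
end

section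
/- Let c_{αβγ} (α,β,γ = 1,…,r) be real constants, antisymmetric in the first two indices and satisfying the Jacobi identity Σ_{m=1}^r (c_{αβm} c_{mγn} + c_{βγm} c_{mαn} + c_{γαm} c_{mβn}) = 0 for all indices. Let b_1,…,b_r : ℝ → ℝ be continuous. If f, g : ℝ → ℝ^r are differentiable curves both satisfying the linear system f_α'(t) = Σ_{δ,β=1}^r b_β(t) f_δ(t) c_{δβα} for all α (and likewise for g), then the curve h : ℝ → ℝ^r with components h_α(t) = Σ_{β,γ=1}^r c_{βγα} f_β(t) g_γ(t) satisfies the same system: h_α'(t) = Σ_{δ,β=1}^r b_β(t) h_δ(t) c_{δβα} for all α and t. -/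
private lemma sum4_reindex {r : ℕ} (F G : Fin r → Fin r → Fin r → Fin r → ℝ)
    (σ : (Fin r × Fin r × Fin r × Fin r) ≃ (Fin r × Fin r × Fin r × Fin r))
    (h : ∀ p : Fin r × Fin r × Fin r × Fin r,
        F p.1 p.2.1 p.2.2.1 p.2.2.2 = G (σ p).1 (σ p).2.1 (σ p).2.2.1 (σ p).2.2.2) :
    ∑ a, ∑ b, ∑ c, ∑ d, F a b c d = ∑ a, ∑ b, ∑ c, ∑ d, G a b c d := by
  have h1 : ∑ a, ∑ b, ∑ c, ∑ d, F a b c d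
      = ∑ p : Fin r × Fin r × Fin r × Fin r, F p.1 p.2.1 p.2.2.1 p.2.2.2 := by
    simp [Fintype.sum_prod_type]
  have h2 : ∑ a, ∑ b, ∑ c, ∑ d, G a b c d
      = ∑ p : Fin r × Fin r × Fin r × Fin r, G p.1 p.2.1 p.2.2.1 p.2.2.2 := by
    simp [Fintype.sum_prod_type]
  rw [h1, h2]
  exact Fintype.sum_equiv σ _ _ h

private lemma key_alg {r : ℕ} (c : Fin r → Fin r → Fin r → ℝ)
    (hanti : ∀ α β γ, c α β γ = -c β α γ)
    (hjac : ∀ α β γ n, ∑ m, (c α β m * c m γ n + c β γ m * c m α n + c γ α m * c m β n) = 0)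
    (a x y : Fin r → ℝ) (α : Fin r) :
    ∑ δ, ∑ ε, a ε * (∑ β, ∑ γ, c β γ δ * x β * y γ) * c δ ε α
      = ∑ β, ∑ γ, c β γ α *
        ((∑ δ, ∑ ε, a ε * x δ * c δ ε β) * y γ + x β * (∑ δ, ∑ ε, a ε * y δ * c δ ε γ)) := by
  have hL : ∑ δ, ∑ ε, a ε * (∑ β, ∑ γ, c β γ δ * x β * y γ) * c δ ε α
      = ∑ β, ∑ γ, ∑ ε, ∑ m, x β * y γ * a ε * (c β γ m * c m ε α) := by
    simp only [Finset.sum_mul, Finset.mul_sum]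
    exact sum4_reindex _ _
      ⟨fun p => (p.2.2.1, p.2.2.2, p.2.1, p.1), fun q => (q.2.2.2, q.2.2.1, q.1, q.2.1),
        fun p => rfl, fun q => rfl⟩ (fun p => by dsimp; ring)
  have hR1 : ∑ β, ∑ γ, c β γ α * ((∑ δ, ∑ ε, a ε * x δ * c δ ε β) * y γ)
      = ∑ β, ∑ γ, ∑ ε, ∑ m, x β * y γ * a ε * (c β ε m * c m γ α) := by
    simp only [Finset.sum_mul, Finset.mul_sum]
    exact sum4_reindex _ _
      ⟨fun p => (p.2.2.1, p.2.1, p.2.2.2, p.1), fun q => (q.2.2.2, q.2.1, q.1, q.2.2.1),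
        fun p => rfl, fun q => rfl⟩ (fun p => by dsimp; ring)
  have hR2 : ∑ β, ∑ γ, c β γ α * (x β * (∑ δ, ∑ ε, a ε * y δ * c δ ε γ))
      = ∑ β, ∑ γ, ∑ ε, ∑ m, x β * y γ * a ε * (c γ ε m * c β m α) := by
    simp only [Finset.sum_mul, Finset.mul_sum]
    exact sum4_reindex _ _
      ⟨fun p => (p.1, p.2.2.1, p.2.2.2, p.2.1), fun q => (q.1, q.2.2.2, q.2.1, q.2.2.1),
        fun p => rfl, fun q => rfl⟩ (fun p => by dsimp; ring)
  have split : ∑ β, ∑ γ, c β γ α *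
        ((∑ δ, ∑ ε, a ε * x δ * c δ ε β) * y γ + x β * (∑ δ, ∑ ε, a ε * y δ * c δ ε γ))
      = (∑ β, ∑ γ, c β γ α * ((∑ δ, ∑ ε, a ε * x δ * c δ ε β) * y γ))
        + ∑ β, ∑ γ, c β γ α * (x β * (∑ δ, ∑ ε, a ε * y δ * c δ ε γ)) := by
    simp only [mul_add, Finset.sum_add_distrib]
  rw [split, hR1, hR2, hL]
  rw [← Finset.sum_add_distrib]
  refine Finset.sum_congr rfl fun β _ => ?_
  rw [← Finset.sum_add_distrib]
  refine Finset.sum_congr rfl fun γ _ => ?_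
  rw [← Finset.sum_add_distrib]
  refine Finset.sum_congr rfl fun ε _ => ?_
  have hj := hjac β γ ε α
  rw [Finset.sum_add_distrib, Finset.sum_add_distrib] at hj
  have e1 : ∑ m, x β * y γ * a ε * (c β ε m * c m γ α)
      = -(x β * y γ * a ε * ∑ m, c ε β m * c m γ α) := by
    rw [Finset.mul_sum, ← Finset.sum_neg_distrib]
    exact Finset.sum_congr rfl fun m _ => by rw [hanti β ε]; ring
  have e2 : ∑ m, x β * y γ * a ε * (c γ ε m * c β m α)
      = -(x β * y γ * a ε * ∑ m, c γ ε m * c m β α) := by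
    rw [Finset.mul_sum, ← Finset.sum_neg_distrib]
    exact Finset.sum_congr rfl fun m _ => by rw [hanti β m]; ring
  have e0 : ∑ m, x β * y γ * a ε * (c β γ m * c m ε α)
      = x β * y γ * a ε * ∑ m, c β γ m * c m ε α := by
    rw [Finset.mul_sum]
  have hs : (∑ m, c β γ m * c m ε α)
      = -((∑ m, c γ ε m * c m β α) + (∑ m, c ε β m * c m γ α)) := by linarith
  rw [e0, e1, e2, hs]; ring

/-- If `f` and `g` both solve the reduced symmetry system
`f_α' = Σ_{δ,β} b_β f_δ c_{δβα}` of a Lie system with structure constants `c` (antisymmetric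
and satisfying the Jacobi identity), then so does their pointwise bracket
`h_α = Σ_{β,γ} c_{βγα} f_β g_γ`. -/
theorem bracket_of_solutions_solves_symmetry_system {r : ℕ}
    (c : Fin r → Fin r → Fin r → ℝ)
    (hanti : ∀ α β γ, c α β γ = -c β α γ)
    (hjac : ∀ α β γ n, ∑ m, (c α β m * c m γ n + c β γ m * c m α n + c γ α m * c m β n) = 0)
    (b : Fin r → ℝ → ℝ) (hb : ∀ α, Continuous (b α))
    (f g : Fin r → ℝ → ℝ)
    (hf : ∀ α t, HasDerivAt (f α) (∑ δ, ∑ β, b β t * f δ t * c δ β α) t)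
    (hg : ∀ α t, HasDerivAt (g α) (∑ δ, ∑ β, b β t * g δ t * c δ β α) t) :
    ∀ α t, HasDerivAt (fun s => ∑ β, ∑ γ, c β γ α * f β s * g γ s)
      (∑ δ, ∑ β, b β t * (∑ β', ∑ γ', c β' γ' δ * f β' t * g γ' t) * c δ β α) t := by
  intro α t
  have hd : HasDerivAt (fun s => ∑ β, ∑ γ, c β γ α * f β s * g γ s)
      (∑ β, ∑ γ, c β γ α * ((∑ δ, ∑ ε, b ε t * f δ t * c δ ε β) * g γ t
        + f β t * (∑ δ, ∑ ε, b ε t * g δ t * c δ ε γ))) t := by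
    refine HasDerivAt.fun_sum fun β _ => HasDerivAt.fun_sum fun γ _ => ?_
    have h := ((hf β t).mul (hg γ t)).const_mul (c β γ α)
    simpa [mul_assoc, mul_add] using h
  have halg := key_alg c hanti hjac (fun ε => b ε t) (fun β => f β t) (fun γ => g γ t) α
  simpa using halg ▸ hd
end

section
/- Let X_1,…,X_r : ℝ^n → ℝ^n be smooth vector fields that are linearly independent over ℝ and satisfy [X_α, X_β] = Σ_{γ=1}^r c_{αβγ} X_γ. Let b_{αl} : ℝ^s → ℝ (α = 1,…,r; l = 1,…,s) and f_1,…,f_r : ℝ^s → ℝ be smooth. Define vector fields on ℝ^s × ℝ^n by X̄^l(t,x) = (e_l, Σ_{α=1}^r b_{αl}(t) X_α(x)), where e_l is the l-th standard basis vector of ℝ^s, and Y(t,x) = (0, Σ_{β=1}^r f_β(t) X_β(x)). Then [X̄^l, Y] = 0 for every l = 1,…,s if and only if the coefficients satisfy the first-order PDE system ∂f_π/∂t_l (t) = Σ_{α,δ=1}^r b_{αl}(t) f_δ(t) c_{δαπ} for all π = 1,…,r, all l = 1,…,s, and all t ∈ ℝ^s. -/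
open ContDiff VectorField

private lemma fderiv_pair_sum_smul {n r s : ℕ}
    (a : Fin r → (Fin s → ℝ) → ℝ) (ha : ∀ α, Differentiable ℝ (a α))
    (X : Fin r → (Fin n → ℝ) → (Fin n → ℝ)) (hX : ∀ α, Differentiable ℝ (X α))
    (e : Fin s → ℝ) (p w : (Fin s → ℝ) × (Fin n → ℝ)) :
    fderiv ℝ (fun q : (Fin s → ℝ) × (Fin n → ℝ) => (e, ∑ α, a α q.1 • X α q.2)) p w
      = (0, ∑ α, (a α p.1 • fderiv ℝ (X α) p.2 w.2 + fderiv ℝ (a α) p.1 w.1 • X α p.2)) := by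
  set L : Fin r → ((Fin s → ℝ) × (Fin n → ℝ)) →L[ℝ] (Fin n → ℝ) := fun α =>
    a α p.1 • ((fderiv ℝ (X α) p.2).comp (ContinuousLinearMap.snd ℝ _ _))
      + (((fderiv ℝ (a α) p.1).comp (ContinuousLinearMap.fst ℝ _ _)).smulRight (X α p.2))
    with hL
  have H : ∀ α : Fin r, HasFDerivAt
      (fun q : (Fin s → ℝ) × (Fin n → ℝ) => a α q.1 • X α q.2) (L α) p := by
    intro α
    exact (((ha α) p.1).hasFDerivAt.comp p hasFDerivAt_fst).smul
      (((hX α) p.2).hasFDerivAt.comp p hasFDerivAt_snd)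
  have H2 : HasFDerivAt
      (fun q : (Fin s → ℝ) × (Fin n → ℝ) => (e, ∑ α, a α q.1 • X α q.2))
      ((0 : ((Fin s → ℝ) × (Fin n → ℝ)) →L[ℝ] (Fin s → ℝ)).prod (∑ α, L α)) p :=
    HasFDerivAt.prodMk (hasFDerivAt_const e p) (HasFDerivAt.fun_sum fun α _ => H α)
  rw [H2.fderiv]
  simp [hL, ContinuousLinearMap.sum_apply]

/-- For a PDE Lie system with autonomizations
`X̄^l(t,x) = (e_l, Σ_α b_{αl}(t) X_α(x))` on `ℝ^s × ℝ^n`, a vector field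
`Y(t,x) = (0, Σ_β f_β(t) X_β(x))` satisfies `[X̄^l, Y] = 0` for every `l`
iff the coefficients solve `∂f_π/∂t_l = Σ_{α,δ} b_{αl} f_δ c_{δαπ}`. -/
theorem pde_lie_symmetry_iff {n r s : ℕ}
    (X : Fin r → (Fin n → ℝ) → (Fin n → ℝ))
    (hXsmooth : ∀ α, ContDiff ℝ ∞ (X α))
    (hXind : LinearIndependent ℝ X)
    (c : Fin r → Fin r → Fin r → ℝ)
    (hc : ∀ α β, lieBracket ℝ (X α) (X β) = fun x => ∑ γ, c α β γ • X γ x)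
    (b : Fin r → Fin s → (Fin s → ℝ) → ℝ)
    (hb : ∀ α l, ContDiff ℝ ∞ (b α l))
    (f : Fin r → (Fin s → ℝ) → ℝ)
    (hf : ∀ α, ContDiff ℝ ∞ (f α))
    (Xbar : Fin s → (Fin s → ℝ) × (Fin n → ℝ) → (Fin s → ℝ) × (Fin n → ℝ))
    (Y : (Fin s → ℝ) × (Fin n → ℝ) → (Fin s → ℝ) × (Fin n → ℝ))
    (hXbar : Xbar = fun l p => ((Pi.single l (1 : ℝ) : Fin s → ℝ), ∑ α, b α l p.1 • X α p.2))
    (hY : Y = fun p => (0, ∑ β, f β p.1 • X β p.2)) :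
    (∀ l, lieBracket ℝ (Xbar l) Y = 0) ↔
      (∀ π l t, fderiv ℝ (f π) t (Pi.single l (1 : ℝ)) =
        ∑ α, ∑ δ, b α l t * f δ t * c δ α π) := by
  subst hXbar hY
  have hXd : ∀ α, Differentiable ℝ (X α) := fun α => (hXsmooth α).differentiable (by simp)
  have hbd : ∀ α l, Differentiable ℝ (b α l) := fun α l => (hb α l).differentiable (by simp)
  have hfd : ∀ α, Differentiable ℝ (f α) := fun α => (hf α).differentiable (by simp)
  -- pointwise structure constants
  have hcpt : ∀ α β x, fderiv ℝ (X β) x (X α x) - fderiv ℝ (X α) x (X β x)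
      = ∑ γ, c α β γ • X γ x := fun α β x => congrFun (hc α β) x
  -- linear independence, pointwise form
  have hind : ∀ g : Fin r → ℝ, (∀ x, ∑ γ, g γ • X γ x = 0) → ∀ γ, g γ = 0 := by
    intro g hg
    refine Fintype.linearIndependent_iff.1 hXind g ?_
    funext x
    simpa [Finset.sum_apply] using hg x
  -- antisymmetry of structure constants
  have hanti : ∀ α β γ, c β α γ = - c α β γ := by
    intro α β γ
    have hz : ∀ x, ∑ γ, (c α β γ + c β α γ) • X γ x = 0 := by
      intro x
      have h1 := hcpt α β x
      have h2 := hcpt β α x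
      have : (∑ γ, c α β γ • X γ x) + (∑ γ, c β α γ • X γ x) = 0 := by
        rw [← h1, ← h2]; abel
      simpa [add_smul, Finset.sum_add_distrib] using this
    have := hind _ hz γ
    linarith
  -- the key pointwise computation of the bracket
  have key : ∀ (l : Fin s) (p : (Fin s → ℝ) × (Fin n → ℝ)),
      lieBracket ℝ (fun p => ((Pi.single l (1 : ℝ) : Fin s → ℝ), ∑ α, b α l p.1 • X α p.2))
        (fun p => (0, ∑ β, f β p.1 • X β p.2)) p
      = (0, ∑ γ, (fderiv ℝ (f γ) p.1 (Pi.single l 1)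
            + ∑ α, ∑ β, b α l p.1 * f β p.1 * c α β γ) • X γ p.2) := by
    intro l p
    have h1 := fderiv_pair_sum_smul f hfd X hXd 0 p
      (Pi.single l (1 : ℝ), ∑ α, b α l p.1 • X α p.2)
    have h2 := fderiv_pair_sum_smul (fun α => b α l) (fun α => hbd α l) X hXd
      (Pi.single l (1 : ℝ)) p ((0 : Fin s → ℝ), ∑ β, f β p.1 • X β p.2)
    show fderiv ℝ (fun p => ((0 : Fin s → ℝ), ∑ β, f β p.1 • X β p.2)) p
        (Pi.single l (1 : ℝ), ∑ α, b α l p.1 • X α p.2)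
      - fderiv ℝ (fun p => ((Pi.single l (1 : ℝ) : Fin s → ℝ), ∑ α, b α l p.1 • X α p.2)) p
        ((0 : Fin s → ℝ), ∑ β, f β p.1 • X β p.2) = _
    rw [h1, h2]
    rw [Prod.mk_sub_mk, sub_zero]
    refine Prod.ext rfl ?_
    have e1 : ∀ β, fderiv ℝ (X β) p.2 (∑ α, b α l p.1 • X α p.2)
        = ∑ α, b α l p.1 • fderiv ℝ (X β) p.2 (X α p.2) := by
      intro β; rw [map_sum]; simp
    have e2 : ∀ α, fderiv ℝ (X α) p.2 (∑ β, f β p.1 • X β p.2)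
        = ∑ β, f β p.1 • fderiv ℝ (X α) p.2 (X β p.2) := by
      intro α; rw [map_sum]; simp
    simp only [e1, e2, map_zero, zero_smul, add_zero, Finset.smul_sum, smul_smul,
      add_smul, Finset.sum_add_distrib, Finset.sum_smul]
    rw [Finset.sum_comm (f := fun β α => (f β p.1 * b α l p.1) • fderiv ℝ (X β) p.2 (X α p.2))]
    have hAB : (∑ α, ∑ β, (f β p.1 * b α l p.1) • fderiv ℝ (X β) p.2 (X α p.2))
        - ∑ α, ∑ β, (b α l p.1 * f β p.1) • fderiv ℝ (X α) p.2 (X β p.2)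
        = ∑ γ, ∑ α, ∑ β, (b α l p.1 * f β p.1 * c α β γ) • X γ p.2 := by
      have hswap : (∑ γ, ∑ α, ∑ β, (b α l p.1 * f β p.1 * c α β γ) • X γ p.2)
          = ∑ α, ∑ β, ∑ γ, (b α l p.1 * f β p.1 * c α β γ) • X γ p.2 := by
        rw [Finset.sum_comm]
        exact Finset.sum_congr rfl fun α _ => Finset.sum_comm
      rw [hswap, ← Finset.sum_sub_distrib]
      refine Finset.sum_congr rfl fun α _ => ?_
      rw [← Finset.sum_sub_distrib]
      refine Finset.sum_congr rfl fun β _ => ?_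
      rw [mul_comm (f β p.1), ← smul_sub, hcpt α β p.2, Finset.smul_sum]
      exact Finset.sum_congr rfl fun γ _ => by rw [smul_smul]
    rw [add_sub_right_comm, hAB, add_comm]
  constructor
  · intro h π l t
    have hz : ∀ x : Fin n → ℝ, ∑ γ, (fderiv ℝ (f γ) t (Pi.single l 1)
        + ∑ α, ∑ β, b α l t * f β t * c α β γ) • X γ x = 0 := by
      intro x
      have h0 := congrFun (h l) (t, x)
      rw [key l (t, x)] at h0
      simpa [Prod.ext_iff] using h0
    have h1 := hind _ hz π
    have h2 : fderiv ℝ (f π) t (Pi.single l 1)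
        = - ∑ α, ∑ β, b α l t * f β t * c α β π := by linarith
    rw [h2, ← Finset.sum_neg_distrib]
    refine Finset.sum_congr rfl fun α _ => ?_
    rw [← Finset.sum_neg_distrib]
    refine Finset.sum_congr rfl fun δ _ => ?_
    rw [hanti α δ π]; ring
  · intro h l
    funext p
    rw [key l p]
    have hz : ∀ γ, fderiv ℝ (f γ) p.1 (Pi.single l 1)
        + ∑ α, ∑ β, b α l p.1 * f β p.1 * c α β γ = 0 := by
      intro γ
      rw [h γ l p.1]
      have : (∑ α, ∑ δ, b α l p.1 * f δ p.1 * c δ α γ)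
          = - ∑ α, ∑ β, b α l p.1 * f β p.1 * c α β γ := by
        rw [← Finset.sum_neg_distrib]
        refine Finset.sum_congr rfl fun α _ => ?_
        rw [← Finset.sum_neg_distrib]
        refine Finset.sum_congr rfl fun δ _ => ?_
        rw [hanti α δ γ]; ring
      rw [this]; ring
    simp [hz, Prod.ext_iff]
end

section
/- Let η : ℝ → ℝ be smooth and let f_0 : ℝ → ℝ be a smooth function satisfying the third-order ODE f_0'''(t) + 4 f_0'(t) η(t) + 2 η'(t) f_0(t) = 0 for all t. Define vector fields on ℝ × ℝ (coordinates (t,x)) by X̄(t,x) = (1, η(t) + x²) and Y(t,x) = (f_0(t), −(1/2) f_0''(t) − f_0'(t) x). Then [Y, X̄] = h·X̄ with h(t,x) = −f_0'(t); that is, Y = f_0 ∂/∂t − (1/2) f_0'' ∂/∂x − f_0' x ∂/∂x is a Lie symmetry of the Riccati equation dx/dt = η(t) + x². -/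
open ContDiff VectorField

/-- If `f₀''' + 4 f₀' η + 2 η' f₀ = 0`, then
`Y = f₀ ∂/∂t − (1/2) f₀'' ∂/∂x − f₀' x ∂/∂x` is a Lie symmetry of the Riccati equation
`dx/dt = η(t) + x²`, with `[Y, X̄] = −f₀'(t) · X̄`. -/
theorem riccati_lie_symmetry (η f0 : ℝ → ℝ)
    (hη : ContDiff ℝ ∞ η) (hf0 : ContDiff ℝ ∞ f0)
    (hode : ∀ t, deriv (deriv (deriv f0)) t + 4 * deriv f0 t * η t + 2 * deriv η t * f0 t = 0)
    (Xbar Y : ℝ × ℝ → ℝ × ℝ)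
    (hXbar : Xbar = fun p => (1, η p.1 + p.2 ^ 2))
    (hY : Y = fun p => (f0 p.1, -(1 / 2) * deriv (deriv f0) p.1 - deriv f0 p.1 * p.2)) :
    lieBracket ℝ Y Xbar = fun p => (-(deriv f0 p.1)) • Xbar p := by
  have hf1 : ContDiff ℝ ∞ (deriv f0) := (contDiff_infty_iff_deriv.mp hf0).2
  have hf2 : ContDiff ℝ ∞ (deriv (deriv f0)) := (contDiff_infty_iff_deriv.mp hf1).2
  funext p
  have Hη : HasDerivAt η (deriv η p.1) p.1 :=
    ((contDiff_infty_iff_deriv.mp hη).1 p.1).hasDerivAt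
  have Hf0 : HasDerivAt f0 (deriv f0 p.1) p.1 :=
    ((contDiff_infty_iff_deriv.mp hf0).1 p.1).hasDerivAt
  have Hf1 : HasDerivAt (deriv f0) (deriv (deriv f0) p.1) p.1 :=
    ((contDiff_infty_iff_deriv.mp hf1).1 p.1).hasDerivAt
  have Hf2 : HasDerivAt (deriv (deriv f0)) (deriv (deriv (deriv f0)) p.1) p.1 :=
    ((contDiff_infty_iff_deriv.mp hf2).1 p.1).hasDerivAt
  -- derivative of Xbar
  have hXd : HasFDerivAt Xbar
      ((0 : ℝ×ℝ →L[ℝ] ℝ).prod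
        ((deriv η p.1) • ContinuousLinearMap.fst ℝ ℝ ℝ
          + (2 * p.2) • ContinuousLinearMap.snd ℝ ℝ ℝ)) p := by
    rw [hXbar]
    apply HasFDerivAt.prodMk
    · exact hasFDerivAt_const (1:ℝ) p
    · have h1 : HasFDerivAt (fun q : ℝ×ℝ => η q.1)
          ((deriv η p.1) • ContinuousLinearMap.fst ℝ ℝ ℝ) p := by
        have := Hη.hasFDerivAt.comp p (hasFDerivAt_fst (p := p))
        refine this.congr_fderiv ?_
        ext v <;> simp [mul_comm]
      have h2 : HasFDerivAt (fun q : ℝ×ℝ => q.2 ^ 2)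
          ((2 * p.2) • ContinuousLinearMap.snd ℝ ℝ ℝ) p := by
        have := (hasFDerivAt_snd (𝕜 := ℝ) (p := p)).mul (hasFDerivAt_snd (𝕜 := ℝ) (p := p))
        refine (this.congr_fderiv ?_).congr_of_eventuallyEq (Filter.Eventually.of_forall fun q => ?_)
        · ext v <;> simp <;> ring
        · simp; ring
      exact h1.add h2
  -- derivative of Y
  have hYd : HasFDerivAt Y
      (((deriv f0 p.1) • ContinuousLinearMap.fst ℝ ℝ ℝ).prod
        ((-(1/2) * deriv (deriv (deriv f0)) p.1 - deriv (deriv f0) p.1 * p.2) •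
            ContinuousLinearMap.fst ℝ ℝ ℝ
          + (-(deriv f0 p.1)) • ContinuousLinearMap.snd ℝ ℝ ℝ)) p := by
    rw [hY]
    apply HasFDerivAt.prodMk
    · have := Hf0.hasFDerivAt.comp p (hasFDerivAt_fst (p := p))
      refine this.congr_fderiv ?_
      ext v <;> simp [mul_comm]
    · have h2 := ((Hf2.hasFDerivAt.comp p (hasFDerivAt_fst (p := p))).const_mul (-(1/2):ℝ)).sub
        ((Hf1.hasFDerivAt.comp p (hasFDerivAt_fst (p := p))).mul (hasFDerivAt_snd (p := p)))
      refine h2.congr_fderiv ?_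
      ext v <;> simp <;> ring
  have e1 : fderiv ℝ Xbar p = _ := hXd.fderiv
  have e2 : fderiv ℝ Y p = _ := hYd.fderiv
  rw [lieBracket, e1, e2, hXbar, hY]
  ext <;> simp <;> nlinarith [hode p.1]
end

section
/- On ℝ⁴ with coordinates (q_0, q_1, q_2, q_3), define the smooth vector fields X_1^ℍ(q) = (1, 0, 0, 0), X_2^ℍ(q) = (q_0, q_1, q_2, q_3), and X_3^ℍ(q) = (q_0² − q_1² − q_2² − q_3², 2 q_0 q_1, 2 q_0 q_2, 2 q_0 q_3). Then [X_1^ℍ, X_2^ℍ] = X_1^ℍ, [X_1^ℍ, X_3^ℍ] = 2 X_2^ℍ, and [X_2^ℍ, X_3^ℍ] = X_3^ℍ; hence these vector fields span a real Lie algebra isomorphic to sl(2,ℝ), and the quaternionic Riccati equation dq/dt = b_1(t) + b_2(t) q + b_3(t) q² with real t-dependent coefficients is an sl(2,ℝ)-Lie system. -/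
open VectorField

noncomputable def Pj (i : Fin 4) : (Fin 4 → ℝ) →L[ℝ] ℝ := ContinuousLinearMap.proj i

noncomputable def D3 (x : Fin 4 → ℝ) : (Fin 4 → ℝ) →L[ℝ] (Fin 4 → ℝ) :=
  ContinuousLinearMap.pi
    ![(2 * x 0) • Pj 0 - (2 * x 1) • Pj 1 - (2 * x 2) • Pj 2 - (2 * x 3) • Pj 3,
      (2 * x 1) • Pj 0 + (2 * x 0) • Pj 1,
      (2 * x 2) • Pj 0 + (2 * x 0) • Pj 2,
      (2 * x 3) • Pj 0 + (2 * x 0) • Pj 3]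

lemma hasFDerivAt_X3 (x : Fin 4 → ℝ) :
    HasFDerivAt (fun q : Fin 4 → ℝ => ![q 0 ^ 2 - q 1 ^ 2 - q 2 ^ 2 - q 3 ^ 2,
      2 * q 0 * q 1, 2 * q 0 * q 2, 2 * q 0 * q 3]) (D3 x) x := by
  apply hasFDerivAt_pi''
  intro i
  have hq : ∀ j : Fin 4, HasFDerivAt (fun q : Fin 4 → ℝ => q j) (Pj j) x :=
    fun j => (Pj j).hasFDerivAt
  have hmul : ∀ (j k : Fin 4), HasFDerivAt (fun q : Fin 4 → ℝ => q j * q k)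
      (x j • Pj k + x k • Pj j) x := fun j k => (hq j).mul (hq k)
  fin_cases i
  · have h := ((((hmul 0 0).sub (hmul 1 1)).sub (hmul 2 2)).sub (hmul 3 3)).congr_fderiv
      (g' := (ContinuousLinearMap.proj 0).comp (D3 x)) (by ext v; simp [D3, Pj]; ring)
    exact h.congr_of_eventuallyEq (by filter_upwards with q; simp; ring)
  · have h := ((hmul 0 1).const_mul (2:ℝ)).congr_fderiv
      (g' := (ContinuousLinearMap.proj 1).comp (D3 x)) (by ext v; simp [D3, Pj]; ring)
    exact h.congr_of_eventuallyEq (by filter_upwards with q; simp; ring)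
  · have h := ((hmul 0 2).const_mul (2:ℝ)).congr_fderiv
      (g' := (ContinuousLinearMap.proj 2).comp (D3 x)) (by ext v; simp [D3, Pj]; ring)
    exact h.congr_of_eventuallyEq (by filter_upwards with q; simp; ring)
  · have h := ((hmul 0 3).const_mul (2:ℝ)).congr_fderiv
      (g' := (ContinuousLinearMap.proj 3).comp (D3 x)) (by ext v; simp [D3, Pj]; ring)
    exact h.congr_of_eventuallyEq (by filter_upwards with q; simp; ring)

/-- The quaternionic Riccati vector fields on `ℝ⁴` (coordinates
`(q₀,q₁,q₂,q₃)`) satisfy the `sl(2,ℝ)` commutation relations, and the quaternionic Riccati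
equation with real `t`-dependent coefficients is associated with a `t`-dependent vector
field taking values in their span, so it is an `sl(2,ℝ)`-Lie system. -/
theorem quaternionic_riccati_sl2
    (X1 X2 X3 : (Fin 4 → ℝ) → Fin 4 → ℝ)
    (h1 : X1 = fun _ => ![1, 0, 0, 0])
    (h2 : X2 = fun q => q)
    (h3 : X3 = fun q => ![q 0 ^ 2 - q 1 ^ 2 - q 2 ^ 2 - q 3 ^ 2,
      2 * q 0 * q 1, 2 * q 0 * q 2, 2 * q 0 * q 3]) :
    lieBracket ℝ X1 X2 = X1 ∧
    (lieBracket ℝ X1 X3 = fun q => (2 : ℝ) • X2 q) ∧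
    lieBracket ℝ X2 X3 = X3 ∧
    (∀ (b1 b2 b3 : ℝ → ℝ) (t : ℝ),
      (fun q : Fin 4 → ℝ =>
          ![b1 t + b2 t * q 0 + b3 t * (q 0 ^ 2 - q 1 ^ 2 - q 2 ^ 2 - q 3 ^ 2),
            b2 t * q 1 + 2 * b3 t * q 0 * q 1,
            b2 t * q 2 + 2 * b3 t * q 0 * q 2,
            b2 t * q 3 + 2 * b3 t * q 0 * q 3]) ∈
        Submodule.span ℝ ({X1, X2, X3} : Set ((Fin 4 → ℝ) → Fin 4 → ℝ))) := by
  subst h1 h2 h3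
  have hd1 : ∀ x, fderiv ℝ (fun _ : Fin 4 → ℝ => ![(1:ℝ), 0, 0, 0]) x = 0 := by
    intro x; exact fderiv_const_apply _
  have hd2 : ∀ x : Fin 4 → ℝ, fderiv ℝ (fun q : Fin 4 → ℝ => q) x =
      ContinuousLinearMap.id ℝ (Fin 4 → ℝ) := by
    intro x; exact (hasFDerivAt_id x).fderiv
  have hd3 : ∀ x : Fin 4 → ℝ, fderiv ℝ (fun q : Fin 4 → ℝ =>
      ![q 0 ^ 2 - q 1 ^ 2 - q 2 ^ 2 - q 3 ^ 2,
      2 * q 0 * q 1, 2 * q 0 * q 2, 2 * q 0 * q 3]) x = D3 x :=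
    fun x => (hasFDerivAt_X3 x).fderiv
  refine ⟨?_, ?_, ?_, ?_⟩
  · funext x
    simp [lieBracket, hd1, hd2]
  · funext x
    simp only [lieBracket, hd1, hd3, ContinuousLinearMap.zero_apply, sub_zero]
    funext i
    fin_cases i <;> simp [D3, Pj]
  · funext x
    simp only [lieBracket, hd2, hd3, ContinuousLinearMap.id_apply]
    funext i
    fin_cases i <;> simp [D3, Pj] <;> ring
  · intro b1 b2 b3 t
    have heq : (fun q : Fin 4 → ℝ =>
          ![b1 t + b2 t * q 0 + b3 t * (q 0 ^ 2 - q 1 ^ 2 - q 2 ^ 2 - q 3 ^ 2),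
            b2 t * q 1 + 2 * b3 t * q 0 * q 1,
            b2 t * q 2 + 2 * b3 t * q 0 * q 2,
            b2 t * q 3 + 2 * b3 t * q 0 * q 3])
        = b1 t • (fun _ : Fin 4 → ℝ => ![(1:ℝ), 0, 0, 0])
          + b2 t • (fun q : Fin 4 → ℝ => q)
          + b3 t • (fun q : Fin 4 → ℝ => ![q 0 ^ 2 - q 1 ^ 2 - q 2 ^ 2 - q 3 ^ 2,
              2 * q 0 * q 1, 2 * q 0 * q 2, 2 * q 0 * q 3]) := by
      funext q i
      fin_cases i <;>
        simp [Matrix.vecHead, Matrix.vecTail, Function.comp, Fin.succ] <;> ring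
    rw [heq]
    refine add_mem (add_mem ?_ ?_) ?_ <;>
      exact Submodule.smul_mem _ _ (Submodule.subset_span (by simp))
end

section
/- Fix real constants α_1, α_2, α_3 and define τ²(w) = α_1²(w_1 − w_2)(w_3 − w_1) + α_2²(w_2 − w_3)(w_1 − w_2) + α_3²(w_3 − w_1)(w_2 − w_3) for w = (w_1, w_2, w_3) ∈ ℝ³. Define the smooth vector fields on ℝ³: X_1^DBH(w) = (1, 1, 1), X_2^DBH(w) = (w_1, w_2, w_3), and X_3^DBH(w) = −F(w), where F(w) = (w_3 w_2 − w_1 w_3 − w_1 w_2 + τ²(w), w_1 w_3 − w_2 w_1 − w_2 w_3 + τ²(w), w_2 w_1 − w_3 w_2 − w_3 w_1 + τ²(w)) is the right-hand side of the generalized Darboux–Brioschi–Halphen system. Then [X_1^DBH, X_2^DBH] = X_1^DBH, [X_1^DBH, X_3^DBH] = 2 X_2^DBH, and [X_2^DBH, X_3^DBH] = X_3^DBH; hence the generalized Darboux–Brioschi–Halphen system dw/dt = F(w) is an sl(2,ℝ)-Lie system. -/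
open VectorField

private lemma dbh_aux (a1 a2 a3 : ℝ) (x : Fin 3 → ℝ) :
    ∃ L : (Fin 3 → ℝ) →L[ℝ] (Fin 3 → ℝ),
      HasFDerivAt (fun w : Fin 3 → ℝ =>
        ![w 2 * w 1 - w 0 * w 2 - w 0 * w 1 +
            (a1 ^ 2 * (w 0 - w 1) * (w 2 - w 0) + a2 ^ 2 * (w 1 - w 2) * (w 0 - w 1) +
              a3 ^ 2 * (w 2 - w 0) * (w 1 - w 2)),
          w 0 * w 2 - w 1 * w 0 - w 1 * w 2 +
            (a1 ^ 2 * (w 0 - w 1) * (w 2 - w 0) + a2 ^ 2 * (w 1 - w 2) * (w 0 - w 1) +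
              a3 ^ 2 * (w 2 - w 0) * (w 1 - w 2)),
          w 1 * w 0 - w 2 * w 1 - w 2 * w 0 +
            (a1 ^ 2 * (w 0 - w 1) * (w 2 - w 0) + a2 ^ 2 * (w 1 - w 2) * (w 0 - w 1) +
              a3 ^ 2 * (w 2 - w 0) * (w 1 - w 2))]) L x ∧
      ∀ v : Fin 3 → ℝ,
        L v 0 = x 2 * v 1 + x 1 * v 2 - (x 0 * v 2 + x 2 * v 0) - (x 0 * v 1 + x 1 * v 0) +
            (a1 ^ 2 * ((v 0 - v 1) * (x 2 - x 0) + (x 0 - x 1) * (v 2 - v 0)) +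
              a2 ^ 2 * ((v 1 - v 2) * (x 0 - x 1) + (x 1 - x 2) * (v 0 - v 1)) +
              a3 ^ 2 * ((v 2 - v 0) * (x 1 - x 2) + (x 2 - x 0) * (v 1 - v 2))) ∧
        L v 1 = x 0 * v 2 + x 2 * v 0 - (x 1 * v 0 + x 0 * v 1) - (x 1 * v 2 + x 2 * v 1) +
            (a1 ^ 2 * ((v 0 - v 1) * (x 2 - x 0) + (x 0 - x 1) * (v 2 - v 0)) +
              a2 ^ 2 * ((v 1 - v 2) * (x 0 - x 1) + (x 1 - x 2) * (v 0 - v 1)) +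
              a3 ^ 2 * ((v 2 - v 0) * (x 1 - x 2) + (x 2 - x 0) * (v 1 - v 2))) ∧
        L v 2 = x 1 * v 0 + x 0 * v 1 - (x 2 * v 1 + x 1 * v 2) - (x 2 * v 0 + x 0 * v 2) +
            (a1 ^ 2 * ((v 0 - v 1) * (x 2 - x 0) + (x 0 - x 1) * (v 2 - v 0)) +
              a2 ^ 2 * ((v 1 - v 2) * (x 0 - x 1) + (x 1 - x 2) * (v 0 - v 1)) +
              a3 ^ 2 * ((v 2 - v 0) * (x 1 - x 2) + (x 2 - x 0) * (v 1 - v 2))) := by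
  have hp : ∀ i : Fin 3, HasFDerivAt (fun w : Fin 3 → ℝ => w i)
      (ContinuousLinearMap.proj (R := ℝ) i) x := fun i => hasFDerivAt_apply i x
  have ht := (((((hp 0).sub (hp 1)).const_mul (a1 ^ 2)).mul ((hp 2).sub (hp 0))).add
      ((((hp 1).sub (hp 2)).const_mul (a2 ^ 2)).mul ((hp 0).sub (hp 1)))).add
      ((((hp 2).sub (hp 0)).const_mul (a3 ^ 2)).mul ((hp 1).sub (hp 2)))
  have h0 := (((((hp 2).mul (hp 1)).sub ((hp 0).mul (hp 2))).sub ((hp 0).mul (hp 1))).add ht)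
  have h1 := (((((hp 0).mul (hp 2)).sub ((hp 1).mul (hp 0))).sub ((hp 1).mul (hp 2))).add ht)
  have h2 := (((((hp 1).mul (hp 0)).sub ((hp 2).mul (hp 1))).sub ((hp 2).mul (hp 0))).add ht)
  obtain ⟨L0, hL0, e0⟩ : ∃ L0 : (Fin 3 → ℝ) →L[ℝ] ℝ,
      HasFDerivAt (fun w : Fin 3 → ℝ => w 2 * w 1 - w 0 * w 2 - w 0 * w 1 +
        (a1 ^ 2 * (w 0 - w 1) * (w 2 - w 0) + a2 ^ 2 * (w 1 - w 2) * (w 0 - w 1) +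
          a3 ^ 2 * (w 2 - w 0) * (w 1 - w 2))) L0 x ∧
      ∀ v, L0 v = x 2 * v 1 + x 1 * v 2 - (x 0 * v 2 + x 2 * v 0) - (x 0 * v 1 + x 1 * v 0) +
            (a1 ^ 2 * ((v 0 - v 1) * (x 2 - x 0) + (x 0 - x 1) * (v 2 - v 0)) +
              a2 ^ 2 * ((v 1 - v 2) * (x 0 - x 1) + (x 1 - x 2) * (v 0 - v 1)) +
              a3 ^ 2 * ((v 2 - v 0) * (x 1 - x 2) + (x 2 - x 0) * (v 1 - v 2))) :=
    ⟨_, h0, fun v => by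
      simp [ContinuousLinearMap.add_apply, ContinuousLinearMap.sub_apply,
        ContinuousLinearMap.smul_apply, ContinuousLinearMap.proj_apply, smul_eq_mul]
      ring⟩
  obtain ⟨L1, hL1, e1⟩ : ∃ L1 : (Fin 3 → ℝ) →L[ℝ] ℝ,
      HasFDerivAt (fun w : Fin 3 → ℝ => w 0 * w 2 - w 1 * w 0 - w 1 * w 2 +
        (a1 ^ 2 * (w 0 - w 1) * (w 2 - w 0) + a2 ^ 2 * (w 1 - w 2) * (w 0 - w 1) +
          a3 ^ 2 * (w 2 - w 0) * (w 1 - w 2))) L1 x ∧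
      ∀ v, L1 v = x 0 * v 2 + x 2 * v 0 - (x 1 * v 0 + x 0 * v 1) - (x 1 * v 2 + x 2 * v 1) +
            (a1 ^ 2 * ((v 0 - v 1) * (x 2 - x 0) + (x 0 - x 1) * (v 2 - v 0)) +
              a2 ^ 2 * ((v 1 - v 2) * (x 0 - x 1) + (x 1 - x 2) * (v 0 - v 1)) +
              a3 ^ 2 * ((v 2 - v 0) * (x 1 - x 2) + (x 2 - x 0) * (v 1 - v 2))) :=
    ⟨_, h1, fun v => by
      simp [ContinuousLinearMap.add_apply, ContinuousLinearMap.sub_apply,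
        ContinuousLinearMap.smul_apply, ContinuousLinearMap.proj_apply, smul_eq_mul]
      ring⟩
  obtain ⟨L2, hL2, e2⟩ : ∃ L2 : (Fin 3 → ℝ) →L[ℝ] ℝ,
      HasFDerivAt (fun w : Fin 3 → ℝ => w 1 * w 0 - w 2 * w 1 - w 2 * w 0 +
        (a1 ^ 2 * (w 0 - w 1) * (w 2 - w 0) + a2 ^ 2 * (w 1 - w 2) * (w 0 - w 1) +
          a3 ^ 2 * (w 2 - w 0) * (w 1 - w 2))) L2 x ∧
      ∀ v, L2 v = x 1 * v 0 + x 0 * v 1 - (x 2 * v 1 + x 1 * v 2) - (x 2 * v 0 + x 0 * v 2) +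
            (a1 ^ 2 * ((v 0 - v 1) * (x 2 - x 0) + (x 0 - x 1) * (v 2 - v 0)) +
              a2 ^ 2 * ((v 1 - v 2) * (x 0 - x 1) + (x 1 - x 2) * (v 0 - v 1)) +
              a3 ^ 2 * ((v 2 - v 0) * (x 1 - x 2) + (x 2 - x 0) * (v 1 - v 2))) :=
    ⟨_, h2, fun v => by
      simp [ContinuousLinearMap.add_apply, ContinuousLinearMap.sub_apply,
        ContinuousLinearMap.smul_apply, ContinuousLinearMap.proj_apply, smul_eq_mul]
      ring⟩
  refine ⟨ContinuousLinearMap.pi ![L0, L1, L2], hasFDerivAt_pi'' fun i => ?_, fun v => ?_⟩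
  · fin_cases i <;>
      simp only [ContinuousLinearMap.proj_pi, Matrix.cons_val_zero, Matrix.cons_val_one,
        Matrix.head_cons, Matrix.cons_val_two, Matrix.tail_cons, Fin.isValue] <;>
      [exact hL0; exact hL1; exact hL2]
  · refine ⟨?_, ?_, ?_⟩ <;>
      simp only [ContinuousLinearMap.pi_apply, Matrix.cons_val_zero, Matrix.cons_val_one,
        Matrix.head_cons, Matrix.cons_val_two, Matrix.tail_cons, Fin.isValue]
    exacts [e0 v, e1 v, e2 v]

/-- The vector fields `X₁ = Σ ∂/∂wᵢ`, `X₂ = Σ wᵢ ∂/∂wᵢ` and `X₃ = −F`,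
where `F` is the right-hand side of the generalized Darboux--Brioschi--Halphen system,
satisfy the `sl(2,ℝ)` commutation relations; hence the generalized DBH system `dw/dt = F(w)`
is an `sl(2,ℝ)`-Lie system. -/
theorem dbh_sl2 (a1 a2 a3 : ℝ)
    (τsq : (Fin 3 → ℝ) → ℝ)
    (hτ : τsq = fun w => a1 ^ 2 * (w 0 - w 1) * (w 2 - w 0) +
      a2 ^ 2 * (w 1 - w 2) * (w 0 - w 1) + a3 ^ 2 * (w 2 - w 0) * (w 1 - w 2))
    (F : (Fin 3 → ℝ) → Fin 3 → ℝ)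
    (hF : F = fun w => ![w 2 * w 1 - w 0 * w 2 - w 0 * w 1 + τsq w,
      w 0 * w 2 - w 1 * w 0 - w 1 * w 2 + τsq w,
      w 1 * w 0 - w 2 * w 1 - w 2 * w 0 + τsq w])
    (X1 X2 X3 : (Fin 3 → ℝ) → Fin 3 → ℝ)
    (h1 : X1 = fun _ => ![1, 1, 1])
    (h2 : X2 = fun w => w)
    (h3 : X3 = -F) :
    lieBracket ℝ X1 X2 = X1 ∧
    (lieBracket ℝ X1 X3 = fun w => (2 : ℝ) • X2 w) ∧
    lieBracket ℝ X2 X3 = X3 ∧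
    F ∈ Submodule.span ℝ ({X1, X2, X3} : Set ((Fin 3 → ℝ) → Fin 3 → ℝ)) := by
  subst hτ
  have hLF : ∀ x : Fin 3 → ℝ, ∃ L : (Fin 3 → ℝ) →L[ℝ] (Fin 3 → ℝ),
      HasFDerivAt F L x ∧
      ∀ v : Fin 3 → ℝ,
        L v 0 = x 2 * v 1 + x 1 * v 2 - (x 0 * v 2 + x 2 * v 0) - (x 0 * v 1 + x 1 * v 0) +
            (a1 ^ 2 * ((v 0 - v 1) * (x 2 - x 0) + (x 0 - x 1) * (v 2 - v 0)) +
              a2 ^ 2 * ((v 1 - v 2) * (x 0 - x 1) + (x 1 - x 2) * (v 0 - v 1)) +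
              a3 ^ 2 * ((v 2 - v 0) * (x 1 - x 2) + (x 2 - x 0) * (v 1 - v 2))) ∧
        L v 1 = x 0 * v 2 + x 2 * v 0 - (x 1 * v 0 + x 0 * v 1) - (x 1 * v 2 + x 2 * v 1) +
            (a1 ^ 2 * ((v 0 - v 1) * (x 2 - x 0) + (x 0 - x 1) * (v 2 - v 0)) +
              a2 ^ 2 * ((v 1 - v 2) * (x 0 - x 1) + (x 1 - x 2) * (v 0 - v 1)) +
              a3 ^ 2 * ((v 2 - v 0) * (x 1 - x 2) + (x 2 - x 0) * (v 1 - v 2))) ∧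
        L v 2 = x 1 * v 0 + x 0 * v 1 - (x 2 * v 1 + x 1 * v 2) - (x 2 * v 0 + x 0 * v 2) +
            (a1 ^ 2 * ((v 0 - v 1) * (x 2 - x 0) + (x 0 - x 1) * (v 2 - v 0)) +
              a2 ^ 2 * ((v 1 - v 2) * (x 0 - x 1) + (x 1 - x 2) * (v 0 - v 1)) +
              a3 ^ 2 * ((v 2 - v 0) * (x 1 - x 2) + (x 2 - x 0) * (v 1 - v 2))) := by
    intro x
    obtain ⟨L, hL, hE⟩ := dbh_aux a1 a2 a3 x
    refine ⟨L, ?_, hE⟩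
    rw [hF]
    exact hL
  refine ⟨?_, ?_, ?_, ?_⟩
  · funext x
    simp only [h1, h2, lieBracket, fderiv_id', fderiv_const]
    simp
  · funext x
    obtain ⟨L, hL, hE⟩ := hLF x
    have hneg : HasFDerivAt (-F) (-L) x := hL.neg
    simp only [h1, h3, lieBracket, hneg.fderiv, fderiv_fun_const]
    funext i
    fin_cases i <;>
      simp only [Fin.zero_eta, Fin.mk_one, Fin.isValue, show ((⟨2, by norm_num⟩ : Fin 3)) = 2 from rfl, h2, Pi.sub_apply, Pi.zero_apply, ContinuousLinearMap.zero_apply,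
        ContinuousLinearMap.neg_apply, Pi.neg_apply, (hE _).1, (hE _).2.1, (hE _).2.2,
        Matrix.cons_val_zero, Matrix.cons_val_one, Matrix.head_cons, Matrix.cons_val_two,
        Matrix.tail_cons, Pi.smul_apply, smul_eq_mul] <;>
      ring
  · funext x
    obtain ⟨L, hL, hE⟩ := hLF x
    have hneg : HasFDerivAt (-F) (-L) x := hL.neg
    simp only [h2, h3, lieBracket, hneg.fderiv, fderiv_id']
    funext i
    have hFx0 : F x 0 = x 2 * x 1 - x 0 * x 2 - x 0 * x 1 +
        (a1 ^ 2 * (x 0 - x 1) * (x 2 - x 0) + a2 ^ 2 * (x 1 - x 2) * (x 0 - x 1) +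
          a3 ^ 2 * (x 2 - x 0) * (x 1 - x 2)) := by rw [hF]; simp
    have hFx1 : F x 1 = x 0 * x 2 - x 1 * x 0 - x 1 * x 2 +
        (a1 ^ 2 * (x 0 - x 1) * (x 2 - x 0) + a2 ^ 2 * (x 1 - x 2) * (x 0 - x 1) +
          a3 ^ 2 * (x 2 - x 0) * (x 1 - x 2)) := by rw [hF]; simp
    have hFx2 : F x 2 = x 1 * x 0 - x 2 * x 1 - x 2 * x 0 +
        (a1 ^ 2 * (x 0 - x 1) * (x 2 - x 0) + a2 ^ 2 * (x 1 - x 2) * (x 0 - x 1) +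
          a3 ^ 2 * (x 2 - x 0) * (x 1 - x 2)) := by rw [hF]; simp
    fin_cases i <;>
      simp only [Fin.zero_eta, Fin.mk_one, Fin.isValue, show ((⟨2, by norm_num⟩ : Fin 3)) = 2 from rfl, Pi.sub_apply, Pi.neg_apply, ContinuousLinearMap.neg_apply,
        ContinuousLinearMap.coe_id', id_eq, (hE x).1, (hE x).2.1, (hE x).2.2,
        hFx0, hFx1, hFx2] <;>
      ring
  · have hmem : X3 ∈ ({X1, X2, X3} : Set ((Fin 3 → ℝ) → Fin 3 → ℝ)) := by simp
    rw [show F = -X3 from by rw [h3, neg_neg]]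
    exact Submodule.neg_mem _ (Submodule.subset_span hmem)
end

section
/- Fix real constants α_1, α_2, α_3, t_0, λ_1, λ_2, λ_3, let τ²(w) and F(w) be as in the generalized Darboux–Brioschi–Halphen system, and let X_1(w) = (1,1,1), X_2(w) = (w_1, w_2, w_3), X_3(w) = −F(w). Define vector fields on ℝ × ℝ³ by X̄(t,w) = (1, F(w)) and Y(t,w) = (t_0, λ_1 X_1(w) − (2 λ_1 t − λ_2) X_2(w) + (λ_1 t² − λ_2 t + λ_3) X_3(w)). Then [Y, X̄] = 0; that is, Y is a Lie symmetry of the generalized Darboux–Brioschi–Halphen system for every choice of the constants t_0, λ_1, λ_2, λ_3. -/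
noncomputable def L3 (c : Fin 3 → ℝ) : (Fin 3 → ℝ) →L[ℝ] ℝ :=
  c 0 • ContinuousLinearMap.proj 0 + c 1 • ContinuousLinearMap.proj 1 +
    c 2 • ContinuousLinearMap.proj 2

lemma L3_apply (c v : Fin 3 → ℝ) : L3 c v = c 0 * v 0 + c 1 * v 1 + c 2 * v 2 := by
  simp [L3]

noncomputable def tp (a1 a2 a3 : ℝ) (w : Fin 3 → ℝ) : Fin 3 → ℝ :=
  ![a1^2*((w 2 - w 0) - (w 0 - w 1)) + a2^2*(w 1 - w 2) - a3^2*(w 1 - w 2),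
    -(a1^2*(w 2 - w 0)) + a2^2*((w 0 - w 1) - (w 1 - w 2)) + a3^2*(w 2 - w 0),
    a1^2*(w 0 - w 1) - a2^2*(w 0 - w 1) + a3^2*((w 1 - w 2) - (w 2 - w 0))]

noncomputable def DF (a1 a2 a3 : ℝ) (w : Fin 3 → ℝ) : (Fin 3 → ℝ) →L[ℝ] (Fin 3 → ℝ) :=
  ContinuousLinearMap.pi
    ![L3 ![-(w 2) - w 1 + tp a1 a2 a3 w 0, w 2 - w 0 + tp a1 a2 a3 w 1, w 1 - w 0 + tp a1 a2 a3 w 2],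
      L3 ![w 2 - w 1 + tp a1 a2 a3 w 0, -(w 0) - w 2 + tp a1 a2 a3 w 1, w 0 - w 1 + tp a1 a2 a3 w 2],
      L3 ![w 1 - w 2 + tp a1 a2 a3 w 0, w 0 - w 2 + tp a1 a2 a3 w 1, -(w 1) - w 0 + tp a1 a2 a3 w 2]]

lemma hasFD_F (a1 a2 a3 : ℝ) (w : Fin 3 → ℝ) :
    HasFDerivAt (fun w : Fin 3 → ℝ =>
      ![w 2 * w 1 - w 0 * w 2 - w 0 * w 1 +
          (a1 ^ 2 * (w 0 - w 1) * (w 2 - w 0) + a2 ^ 2 * (w 1 - w 2) * (w 0 - w 1) +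
            a3 ^ 2 * (w 2 - w 0) * (w 1 - w 2)),
        w 0 * w 2 - w 1 * w 0 - w 1 * w 2 +
          (a1 ^ 2 * (w 0 - w 1) * (w 2 - w 0) + a2 ^ 2 * (w 1 - w 2) * (w 0 - w 1) +
            a3 ^ 2 * (w 2 - w 0) * (w 1 - w 2)),
        w 1 * w 0 - w 2 * w 1 - w 2 * w 0 +
          (a1 ^ 2 * (w 0 - w 1) * (w 2 - w 0) + a2 ^ 2 * (w 1 - w 2) * (w 0 - w 1) +
            a3 ^ 2 * (w 2 - w 0) * (w 1 - w 2))])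
      (DF a1 a2 a3 w) w := by
  have A : ∀ i : Fin 3, HasFDerivAt (fun f : Fin 3 → ℝ => f i)
      ((ContinuousLinearMap.proj i : (Fin 3 → ℝ) →L[ℝ] ℝ)) w := fun i => hasFDerivAt_apply (𝕜 := ℝ) i w
  have hτ := (((((A 0).sub (A 1)).const_mul (a1^2)).mul ((A 2).sub (A 0))).add
      ((((A 1).sub (A 2)).const_mul (a2^2)).mul ((A 0).sub (A 1)))).add
      ((((A 2).sub (A 0)).const_mul (a3^2)).mul ((A 1).sub (A 2)))
  refine hasFDerivAt_pi'' fun i => ?_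
  fin_cases i
  · refine HasFDerivAt.congr_fderiv
      (((((A 2).mul (A 1)).sub ((A 0).mul (A 2))).sub ((A 0).mul (A 1))).add hτ) ?_
    refine ContinuousLinearMap.ext fun v => ?_
    simp [DF, L3, tp]; ring
  · refine HasFDerivAt.congr_fderiv
      (((((A 0).mul (A 2)).sub ((A 1).mul (A 0))).sub ((A 1).mul (A 2))).add hτ) ?_
    refine ContinuousLinearMap.ext fun v => ?_
    simp [DF, L3, tp]; ring
  · refine HasFDerivAt.congr_fderiv
      (((((A 1).mul (A 0)).sub ((A 2).mul (A 1))).sub ((A 2).mul (A 0))).add hτ) ?_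
    refine ContinuousLinearMap.ext fun v => ?_
    simp [DF, L3, tp]; ring

open VectorField

set_option maxHeartbeats 2000000 in

/-- For every choice of the constants `t₀, λ₁, λ₂, λ₃`, the vector field
`Y = t₀ ∂/∂t + λ₁ X₁ − (2λ₁ t − λ₂) X₂ + (λ₁ t² − λ₂ t + λ₃) X₃` commutes with the
autonomization `X̄ = ∂/∂t + F` of the generalized Darboux--Brioschi--Halphen system, i.e.
it is a Lie symmetry of that system. -/
theorem dbh_lie_symmetry (a1 a2 a3 t0 l1 l2 l3 : ℝ)
    (τsq : (Fin 3 → ℝ) → ℝ)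
    (hτ : τsq = fun w => a1 ^ 2 * (w 0 - w 1) * (w 2 - w 0) +
      a2 ^ 2 * (w 1 - w 2) * (w 0 - w 1) + a3 ^ 2 * (w 2 - w 0) * (w 1 - w 2))
    (F : (Fin 3 → ℝ) → Fin 3 → ℝ)
    (hF : F = fun w => ![w 2 * w 1 - w 0 * w 2 - w 0 * w 1 + τsq w,
      w 0 * w 2 - w 1 * w 0 - w 1 * w 2 + τsq w,
      w 1 * w 0 - w 2 * w 1 - w 2 * w 0 + τsq w])
    (X1 X2 X3 : (Fin 3 → ℝ) → Fin 3 → ℝ)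
    (h1 : X1 = fun _ => ![1, 1, 1])
    (h2 : X2 = fun w => w)
    (h3 : X3 = -F)
    (Xbar Y : ℝ × (Fin 3 → ℝ) → ℝ × (Fin 3 → ℝ))
    (hXbar : Xbar = fun p => (1, F p.2))
    (hY : Y = fun p => (t0, l1 • X1 p.2 - (2 * l1 * p.1 - l2) • X2 p.2 +
      (l1 * p.1 ^ 2 - l2 * p.1 + l3) • X3 p.2)) :
    lieBracket ℝ Y Xbar = 0 := by
  subst hτ hF h1 h2 h3 hXbar hY
  rw [VectorField.lieBracket_eq]
  funext p
  obtain ⟨t, w⟩ := p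
  simp only [Pi.neg_apply]
  have hq : HasFDerivAt (fun p : ℝ × (Fin 3 → ℝ) => l1 * p.1 ^ 2 - l2 * p.1 + l3)
      ((2 * l1 * t - l2) • ContinuousLinearMap.fst ℝ ℝ (Fin 3 → ℝ)) (t, w) := by
    have h := ((((hasFDerivAt_fst (𝕜 := ℝ) (p := (t, w)) (F := Fin 3 → ℝ)).mul
      hasFDerivAt_fst).const_mul l1).sub (hasFDerivAt_fst.const_mul l2)).add_const l3
    refine (h.congr_fderiv ?_).congr_of_eventuallyEq ?_
    · refine ContinuousLinearMap.ext fun u => ?_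
      simp
      ring
    · filter_upwards with q
      simp only [Pi.sub_apply, Pi.mul_apply]
      ring
  have hXd : HasFDerivAt (fun p : ℝ × (Fin 3 → ℝ) =>
      ((1 : ℝ),
        ![p.2 2 * p.2 1 - p.2 0 * p.2 2 - p.2 0 * p.2 1 +
            (a1 ^ 2 * (p.2 0 - p.2 1) * (p.2 2 - p.2 0) + a2 ^ 2 * (p.2 1 - p.2 2) * (p.2 0 - p.2 1) +
              a3 ^ 2 * (p.2 2 - p.2 0) * (p.2 1 - p.2 2)),
          p.2 0 * p.2 2 - p.2 1 * p.2 0 - p.2 1 * p.2 2 +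
            (a1 ^ 2 * (p.2 0 - p.2 1) * (p.2 2 - p.2 0) + a2 ^ 2 * (p.2 1 - p.2 2) * (p.2 0 - p.2 1) +
              a3 ^ 2 * (p.2 2 - p.2 0) * (p.2 1 - p.2 2)),
          p.2 1 * p.2 0 - p.2 2 * p.2 1 - p.2 2 * p.2 0 +
            (a1 ^ 2 * (p.2 0 - p.2 1) * (p.2 2 - p.2 0) + a2 ^ 2 * (p.2 1 - p.2 2) * (p.2 0 - p.2 1) +
              a3 ^ 2 * (p.2 2 - p.2 0) * (p.2 1 - p.2 2))]))
      ((0 : (ℝ × (Fin 3 → ℝ)) →L[ℝ] ℝ).prod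
        ((DF a1 a2 a3 w).comp (ContinuousLinearMap.snd ℝ ℝ (Fin 3 → ℝ)))) (t, w) :=
    HasFDerivAt.prodMk (hasFDerivAt_const (1:ℝ) (t, w)) (by have h := (hasFD_F a1 a2 a3 w).comp (t, w) (hasFDerivAt_snd (𝕜 := ℝ) (p := (t, w))); exact h)
  have hYd : HasFDerivAt (fun p : ℝ × (Fin 3 → ℝ) =>
      (t0,
        l1 • ![(1:ℝ), 1, 1] - (2 * l1 * p.1 - l2) • p.2 +
          (l1 * p.1 ^ 2 - l2 * p.1 + l3) •
            -![p.2 2 * p.2 1 - p.2 0 * p.2 2 - p.2 0 * p.2 1 +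
                  (a1 ^ 2 * (p.2 0 - p.2 1) * (p.2 2 - p.2 0) + a2 ^ 2 * (p.2 1 - p.2 2) * (p.2 0 - p.2 1) +
                    a3 ^ 2 * (p.2 2 - p.2 0) * (p.2 1 - p.2 2)),
                p.2 0 * p.2 2 - p.2 1 * p.2 0 - p.2 1 * p.2 2 +
                  (a1 ^ 2 * (p.2 0 - p.2 1) * (p.2 2 - p.2 0) + a2 ^ 2 * (p.2 1 - p.2 2) * (p.2 0 - p.2 1) +
                    a3 ^ 2 * (p.2 2 - p.2 0) * (p.2 1 - p.2 2)),
                p.2 1 * p.2 0 - p.2 2 * p.2 1 - p.2 2 * p.2 0 +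
                  (a1 ^ 2 * (p.2 0 - p.2 1) * (p.2 2 - p.2 0) + a2 ^ 2 * (p.2 1 - p.2 2) * (p.2 0 - p.2 1) +
                    a3 ^ 2 * (p.2 2 - p.2 0) * (p.2 1 - p.2 2))]))
      ((0 : (ℝ × (Fin 3 → ℝ)) →L[ℝ] ℝ).prod
        (((0 : (ℝ × (Fin 3 → ℝ)) →L[ℝ] (Fin 3 → ℝ)) -
            ((2 * l1 * t - l2) • ContinuousLinearMap.snd ℝ ℝ (Fin 3 → ℝ) +
              ((2 * l1) • ContinuousLinearMap.fst ℝ ℝ (Fin 3 → ℝ)).smulRight w)) +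
          ((l1 * t ^ 2 - l2 * t + l3) •
              (-((DF a1 a2 a3 w).comp (ContinuousLinearMap.snd ℝ ℝ (Fin 3 → ℝ)))) +
            ((2 * l1 * t - l2) • ContinuousLinearMap.fst ℝ ℝ (Fin 3 → ℝ)).smulRight
              (-![w 2 * w 1 - w 0 * w 2 - w 0 * w 1 +
                    (a1 ^ 2 * (w 0 - w 1) * (w 2 - w 0) + a2 ^ 2 * (w 1 - w 2) * (w 0 - w 1) +
                      a3 ^ 2 * (w 2 - w 0) * (w 1 - w 2)),
                  w 0 * w 2 - w 1 * w 0 - w 1 * w 2 +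
                    (a1 ^ 2 * (w 0 - w 1) * (w 2 - w 0) + a2 ^ 2 * (w 1 - w 2) * (w 0 - w 1) +
                      a3 ^ 2 * (w 2 - w 0) * (w 1 - w 2)),
                  w 1 * w 0 - w 2 * w 1 - w 2 * w 0 +
                    (a1 ^ 2 * (w 0 - w 1) * (w 2 - w 0) + a2 ^ 2 * (w 1 - w 2) * (w 0 - w 1) +
                      a3 ^ 2 * (w 2 - w 0) * (w 1 - w 2))])))) (t, w) :=
    HasFDerivAt.prodMk (hasFDerivAt_const t0 (t, w))
      (((hasFDerivAt_const (l1 • ![(1:ℝ), 1, 1]) (t, w)).sub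
          ((((hasFDerivAt_fst.const_mul (2 * l1)).sub_const l2)).smul hasFDerivAt_snd)).add
        (hq.smul (by have h := ((hasFD_F a1 a2 a3 w).comp (t, w) (hasFDerivAt_snd (𝕜 := ℝ) (p := (t, w)))).neg; exact h)))
  rw [hXd.fderiv, hYd.fderiv]
  rw [Pi.zero_apply, sub_eq_zero, Prod.ext_iff]
  constructor
  · simp
  · funext i
    fin_cases i <;> (simp [DF, L3, tp, Matrix.vecHead, Matrix.vecTail]; ring)
end

section
/- Fix c_0 ∈ ℝ. On the open set U = {(x,v) ∈ ℝ² : x ≠ 0}, define the vector fields M_1^KS(x,v) = (0, 2x), M_2^KS(x,v) = (x, 2v), and M_3^KS(x,v) = (v, (3/2) v²/x − 2 c_0 x³). Then at every point of U: [M_1^KS, M_2^KS] = M_1^KS, [M_1^KS, M_3^KS] = 2 M_2^KS, and [M_2^KS, M_3^KS] = M_3^KS; hence the first-order system dx/dt = v, dv/dt = (3/2) v²/x − 2 c_0 x³ + 2 η(t) x associated with the second-order Kummer–Schwarz equation is an sl(2,ℝ)-Lie system, being associated with the t-dependent vector field M_3^KS + η(t) M_1^KS. -/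
open VectorField

/-- On the open set `{(x,v) : x ≠ 0}` the Kummer--Schwarz vector fields
`M₁ = 2x ∂/∂v`, `M₂ = x ∂/∂x + 2v ∂/∂v`, `M₃ = v ∂/∂x + ((3/2)v²/x − 2c₀x³) ∂/∂v` satisfy the
`sl(2,ℝ)` commutation relations; the first-order system associated with the second-order
Kummer--Schwarz equation corresponds to the `t`-dependent vector field `M₃ + η(t) M₁`. -/
theorem kummer_schwarz_sl2 (c0 : ℝ)
    (M1 M2 M3 : ℝ × ℝ → ℝ × ℝ)
    (h1 : M1 = fun p => ((0 : ℝ), 2 * p.1))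
    (h2 : M2 = fun p => (p.1, 2 * p.2))
    (h3 : M3 = fun p => (p.2, 3 / 2 * p.2 ^ 2 / p.1 - 2 * c0 * p.1 ^ 3)) :
    ∀ p : ℝ × ℝ, p.1 ≠ 0 →
      lieBracket ℝ M1 M2 p = M1 p ∧
      lieBracket ℝ M1 M3 p = (2 : ℝ) • M2 p ∧
      lieBracket ℝ M2 M3 p = M3 p ∧
      ∀ (η : ℝ → ℝ) (t : ℝ),
        ((p.2, 3 / 2 * p.2 ^ 2 / p.1 - 2 * c0 * p.1 ^ 3 + 2 * η t * p.1) : ℝ × ℝ) =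
          M3 p + η t • M1 p := by
  intro p hx
  subst h1 h2 h3
  have hfun2 : (fun p : ℝ × ℝ => (p.2, 3 / 2 * p.2 ^ 2 / p.1 - 2 * c0 * p.1 ^ 3))
      = fun p : ℝ × ℝ => (p.2, 3 / 2 * (p.2 * p.2) * (p.1)⁻¹ - 2 * c0 * (p.1 * p.1 * p.1)) := by
    funext q; refine Prod.ext rfl ?_; ring
  have hD1 : HasFDerivAt (fun p : ℝ × ℝ => ((0 : ℝ), 2 * p.1))
      ((0 : ℝ × ℝ →L[ℝ] ℝ).prod ((2 : ℝ) • ContinuousLinearMap.fst ℝ ℝ ℝ)) p := by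
    apply HasFDerivAt.prodMk
    · exact hasFDerivAt_const _ _
    · simpa using (hasFDerivAt_fst (p := p)).const_mul (2:ℝ)
  have hD2 : HasFDerivAt (fun p : ℝ × ℝ => (p.1, 2 * p.2))
      ((ContinuousLinearMap.fst ℝ ℝ ℝ).prod ((2 : ℝ) • ContinuousLinearMap.snd ℝ ℝ ℝ)) p := by
    apply HasFDerivAt.prodMk
    · exact hasFDerivAt_fst
    · simpa using (hasFDerivAt_snd (p := p)).const_mul (2:ℝ)
  have hinv : HasFDerivAt (fun p : ℝ × ℝ => (p.1)⁻¹)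
      (((ContinuousLinearMap.smulRight (1 : ℝ →L[ℝ] ℝ) (-(p.1 ^ 2)⁻¹)).comp
        (ContinuousLinearMap.fst ℝ ℝ ℝ))) p :=
    (hasFDerivAt_inv hx).comp p hasFDerivAt_fst
  have hg := ((((hasFDerivAt_snd (p := p)).mul (hasFDerivAt_snd)).const_mul (3/2 : ℝ)).mul
      hinv).sub ((((hasFDerivAt_fst (p := p)).mul (hasFDerivAt_fst)).mul
      (hasFDerivAt_fst)).const_mul (2 * c0 : ℝ))
  have hD3 : HasFDerivAt (fun p : ℝ × ℝ => (p.2, 3 / 2 * (p.2 * p.2) * (p.1)⁻¹ - 2 * c0 * (p.1 * p.1 * p.1))) _ p :=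
    HasFDerivAt.prodMk (hasFDerivAt_snd (p := p)) hg
  refine ⟨?_, ?_, ?_, ?_⟩
  · simp only [lieBracket, hD1.fderiv, hD2.fderiv]
    simp [Prod.ext_iff]
    ring
  · rw [hfun2]
    simp only [lieBracket, hD1.fderiv, hD3.fderiv]
    simp [Prod.ext_iff, smul_smul]
    field_simp
    ring
  · rw [hfun2]
    simp only [lieBracket, hD2.fderiv, hD3.fderiv]
    simp [Prod.ext_iff, smul_smul]
    refine ⟨by ring, ?_⟩
    field_simp
    ring
  · intro η t
    clear hD1 hD2 hD3 hg hinv hfun2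
    refine Prod.ext ?_ ?_ <;>
      simp only [Prod.fst_add, Prod.snd_add, Prod.smul_fst, Prod.smul_snd, smul_eq_mul] <;>
      ring
end

section
/- Let a, b : ℝ → ℝ be continuously differentiable and fix k, c_1, c_2 ∈ ℝ. Define f_2(t) = k b(t) + c_1 and f_1(t) = [ ∫₀ᵗ ( k a'(s) − a(s)(k b(s) + c_1) ) exp(−∫₀ˢ b(u) du) ds + c_2 ] · exp(∫₀ᵗ b(s) ds). Then for all t ∈ ℝ: f_1'(t) = k a'(t) + b(t) f_1(t) − a(t) f_2(t) and f_2'(t) = k b'(t); that is, (f_0, f_1, f_2) = (k, f_1, f_2) is the general solution of the symmetry system of the Aff(ℝ)-Lie system X = a(t) X_1 + b(t) X_2 (with [X_1, X_2] = X_1) for the choice b_0 = 0. -/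
/-- The explicit formulas
`f₂(t) = k b(t) + c₁` and
`f₁(t) = (∫₀ᵗ (k a'(s) − a(s)(k b(s) + c₁)) e^{−∫₀ˢ b} ds + c₂) e^{∫₀ᵗ b}`
give the general solution of the symmetry system of an `Aff(ℝ)`-Lie system
`X = a(t) X₁ + b(t) X₂` (with `[X₁,X₂] = X₁`) for `b₀ = 0`, i.e.
`f₁' = k a' + b f₁ − a f₂` and `f₂' = k b'`. -/
theorem aff_symmetry_system_solution (a b : ℝ → ℝ)
    (ha : ContDiff ℝ 1 a) (hb : ContDiff ℝ 1 b)
    (k c1 c2 : ℝ) (f1 f2 : ℝ → ℝ)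
    (hf2 : f2 = fun t => k * b t + c1)
    (hf1 : f1 = fun t =>
      ((∫ s in (0 : ℝ)..t, (k * deriv a s - a s * (k * b s + c1)) *
          Real.exp (-∫ u in (0 : ℝ)..s, b u)) + c2) *
        Real.exp (∫ s in (0 : ℝ)..t, b s)) :
    ∀ t : ℝ,
      HasDerivAt f1 (k * deriv a t + b t * f1 t - a t * f2 t) t ∧
      HasDerivAt f2 (k * deriv b t) t := by
  have hbc : Continuous b := hb.continuous
  have hac : Continuous a := ha.continuous
  have hac' : Continuous (deriv a) := (ha.iterate_deriv' 0 1).continuous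
  have hB : ∀ t, HasDerivAt (fun t => ∫ s in (0:ℝ)..t, b s) (b t) t := fun t =>
    intervalIntegral.integral_hasDerivAt_right (hbc.intervalIntegrable 0 t)
      hbc.aestronglyMeasurable.stronglyMeasurableAtFilter hbc.continuousAt
  set h : ℝ → ℝ := fun s => (k * deriv a s - a s * (k * b s + c1)) *
      Real.exp (-∫ u in (0:ℝ)..s, b u) with hh
  have hBcont : Continuous (fun s => ∫ u in (0:ℝ)..s, b u) :=
    continuous_iff_continuousAt.2 fun t => (hB t).continuousAt
  have hhc : Continuous h := by
    apply Continuous.mul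
    · exact (continuous_const.mul hac').sub (hac.mul ((continuous_const.mul hbc).add continuous_const))
    · exact Real.continuous_exp.comp hBcont.neg
  intro t
  constructor
  · have hg : HasDerivAt (fun t => ∫ s in (0:ℝ)..t, h s) (h t) t :=
      intervalIntegral.integral_hasDerivAt_right (hhc.intervalIntegrable 0 t)
        hhc.aestronglyMeasurable.stronglyMeasurableAtFilter hhc.continuousAt
    have hE : HasDerivAt (fun t => Real.exp (∫ s in (0:ℝ)..t, b s))
        (Real.exp (∫ s in (0:ℝ)..t, b s) * b t) t := (hB t).exp
    have := ((hg.add_const c2).mul hE)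
    rw [hf1]
    convert this using 1
    · rfl
    · rfl
    · rfl
    rw [hf2]
    have hexp : Real.exp (-∫ u in (0:ℝ)..t, b u) * Real.exp (∫ s in (0:ℝ)..t, b s) = 1 := by
      rw [← Real.exp_add]; simp
    simp only [hh]
    linear_combination (-(k * deriv a t) + a t * (k * b t + c1)) * hexp
  · rw [hf2]
    have hb' : HasDerivAt b (deriv b t) t :=
      ((hb.differentiable one_ne_zero) t).hasDerivAt
    exact (hb'.const_mul k).add_const c1
end

section
/- On ℝ² with coordinates (x,v), define the smooth vector fields X_1(x,v) = (v, −3xv − x³) and X_6(x,v) = (2x(v + x²), 2(v² − x⁴)). Then [X_1, X_6] = 0. Consequently, the vector field Ỹ(t,x,v) = (0, X_6(x,v)) on ℝ × ℝ² commutes with the autonomization X̄(t,x,v) = (1, X_1(x,v)), so X_6 is a Lie symmetry of the first-order system dx/dt = v, dv/dt = −3xv − x³ associated with the Painlevé–Ince equation d²x/dt² = −3x (dx/dt) − x³. -/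
open VectorField

/-- The vector fields `X₁ = v ∂/∂x − (3xv + x³) ∂/∂v` and
`X₆ = 2x(v + x²) ∂/∂x + 2(v² − x⁴) ∂/∂v` on `ℝ²` commute; consequently
`Ỹ = (0, X₆)` commutes with the autonomization `X̄ = ∂/∂t + X₁`, so `X₆` is a Lie symmetry
of the first-order system associated with the Painlevé--Ince equation. -/
theorem painleve_ince_symmetry
    (X1 X6 : ℝ × ℝ → ℝ × ℝ)
    (h1 : X1 = fun p => (p.2, -3 * p.1 * p.2 - p.1 ^ 3))
    (h6 : X6 = fun p => (2 * p.1 * (p.2 + p.1 ^ 2), 2 * (p.2 ^ 2 - p.1 ^ 4)))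
    (Xbar Ytil : ℝ × (ℝ × ℝ) → ℝ × (ℝ × ℝ))
    (hXbar : Xbar = fun q => (1, X1 q.2))
    (hYtil : Ytil = fun q => (0, X6 q.2)) :
    lieBracket ℝ X1 X6 = 0 ∧ lieBracket ℝ Ytil Xbar = 0 := by
  have hd1 : ∀ p : ℝ × ℝ, ∃ D : ℝ × ℝ →L[ℝ] ℝ × ℝ,
      HasFDerivAt X1 D p ∧
      ∀ w : ℝ × ℝ, D w = (w.2, -3 * w.1 * p.2 - 3 * p.1 * w.2 - 3 * p.1 ^ 2 * w.1) := by
    intro p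
    rw [h1]
    refine ⟨_, (HasFDerivAt.prodMk hasFDerivAt_snd (((hasFDerivAt_fst.const_mul (-3)).mul hasFDerivAt_snd).sub
      (((hasDerivAt_pow 3 p.1).hasFDerivAt).comp p hasFDerivAt_fst)) :
      HasFDerivAt (fun p : ℝ × ℝ => ((p.2, -3 * p.1 * p.2 - p.1 ^ 3) : ℝ × ℝ)) _ p), ?_⟩
    intro w
    simp [ContinuousLinearMap.prod_apply]
    ring
  have hd6 : ∀ p : ℝ × ℝ, ∃ D : ℝ × ℝ →L[ℝ] ℝ × ℝ,
      HasFDerivAt X6 D p ∧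
      ∀ w : ℝ × ℝ, D w = (2 * w.1 * (p.2 + p.1 ^ 2) + 2 * p.1 * (w.2 + 2 * p.1 * w.1),
        2 * (2 * p.2 * w.2 - 4 * p.1 ^ 3 * w.1)) := by
    intro p
    rw [h6]
    refine ⟨_, (HasFDerivAt.prodMk ((hasFDerivAt_fst.const_mul 2).mul (hasFDerivAt_snd.add
        (((hasDerivAt_pow 2 p.1).hasFDerivAt).comp p hasFDerivAt_fst)))
      (((((hasDerivAt_pow 2 p.2).hasFDerivAt).comp p hasFDerivAt_snd).sub
        (((hasDerivAt_pow 4 p.1).hasFDerivAt).comp p hasFDerivAt_fst)).const_mul 2) :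
      HasFDerivAt (fun p : ℝ × ℝ =>
        ((2 * p.1 * (p.2 + p.1 ^ 2), 2 * (p.2 ^ 2 - p.1 ^ 4)) : ℝ × ℝ)) _ p), ?_⟩
    intro w
    simp [ContinuousLinearMap.prod_apply]
    ring_nf
    constructor <;> trivial
  have key : ∀ p : ℝ × ℝ, lieBracket ℝ X1 X6 p = 0 := by
    intro p
    obtain ⟨D1, hD1, eD1⟩ := hd1 p
    obtain ⟨D6, hD6, eD6⟩ := hd6 p
    rw [lieBracket, hD1.fderiv, hD6.fderiv, eD1, eD6, h1, h6]
    simp only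
    refine Prod.ext ?_ ?_ <;> simp <;> ring
  constructor
  · funext p; exact key p
  · funext q
    obtain ⟨D1, hD1, eD1⟩ := hd1 q.2
    obtain ⟨D6, hD6, eD6⟩ := hd6 q.2
    have hXb : HasFDerivAt Xbar ((0 : ℝ × (ℝ × ℝ) →L[ℝ] ℝ).prod
        (D1.comp (ContinuousLinearMap.snd ℝ ℝ (ℝ × ℝ)))) q := by
      rw [hXbar]
      exact HasFDerivAt.prodMk (hasFDerivAt_const (1 : ℝ) q) (hD1.comp q hasFDerivAt_snd)
    have hYt : HasFDerivAt Ytil ((0 : ℝ × (ℝ × ℝ) →L[ℝ] ℝ).prod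
        (D6.comp (ContinuousLinearMap.snd ℝ ℝ (ℝ × ℝ)))) q := by
      rw [hYtil]
      exact HasFDerivAt.prodMk (hasFDerivAt_const (0 : ℝ) q) (hD6.comp q hasFDerivAt_snd)
    have hk := key q.2
    rw [lieBracket, hD1.fderiv, hD6.fderiv, eD1, eD6, h1, h6] at hk
    simp only at hk
    rw [lieBracket, hXb.fderiv, hYt.fderiv, hXbar, hYtil, h1, h6]
    simp only [ContinuousLinearMap.prod_apply, ContinuousLinearMap.comp_apply,
      ContinuousLinearMap.coe_snd', ContinuousLinearMap.zero_apply, eD1, eD6]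
    refine Prod.ext ?_ (Prod.ext ?_ ?_) <;> simp <;> ring
end
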